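/- arXiv:0809.4402 — 6 statements merged into one kernel-verified Lean document; each statement's English description precedes it below -/
import Mathlib

section
/- Let A be an invertible 3×3 complex matrix with det A = 1 and tr(A⁻¹) = conj(tr A) (the complex conjugate of tr A). Then: (i) for every nonzero λ ∈ ℂ, det(A − λI) = −λ³ · conj( det(A − (1/conj(λ))·I) ); in particular λ is an eigenvalue of A if and only if 1/conj(λ) is, with the same algebraic multiplicity; and (ii) A has at least one eigenvalue λ with |λ| = 1. -/
open Matrix Polynomial

lemma det3 (A : Matrix (Fin 3) (Fin 3) ℂ) (x : ℂ) :
    (A - x • (1 : Matrix (Fin 3) (Fin 3) ℂ)).det =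
      A.det - A.adjugate.trace * x + A.trace * x ^ 2 - x ^ 3 := by
  simp [Matrix.det_fin_three, Matrix.adjugate_fin_three, Matrix.trace_fin_three,
    Matrix.sub_apply, Matrix.smul_apply, Matrix.one_apply]
  ring

lemma cp3 (A : Matrix (Fin 3) (Fin 3) ℂ) :
    A.charpoly = X ^ 3 - C A.trace * X ^ 2 + C A.adjugate.trace * X - C A.det := by
  rw [Matrix.charpoly, Matrix.det_fin_three]
  simp [charmatrix_apply, Matrix.trace_fin_three, Matrix.adjugate_fin_three,
    Matrix.det_fin_three, Matrix.diagonal_apply]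
  ring

lemma sigma_invol (x : ℂ) : ((starRingEnd ℂ) (((starRingEnd ℂ) x)⁻¹))⁻¹ = x := by
  simp

lemma sigma_fixed {x : ℂ} (h : ‖x‖ = 1) :
    ((starRingEnd ℂ) x)⁻¹ = x := by
  have h1 : x * (starRingEnd ℂ) x = 1 := by
    rw [Complex.mul_conj]
    norm_cast
    rw [Complex.normSq_eq_norm_sq, h]; norm_num
  exact inv_eq_of_mul_eq_one_right (by rw [mul_comm]; exact h1)

lemma repl_le {α : Type*} [DecidableEq α] (s : Multiset α) (x y : α) (hxy : x ≠ y)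
    (m n : ℕ) (hm : m ≤ s.count x) (hn : n ≤ s.count y) :
    Multiset.replicate m x + Multiset.replicate n y ≤ s := by
  rw [Multiset.le_iff_count]
  intro a
  rw [Multiset.count_add, Multiset.count_replicate, Multiset.count_replicate]
  split_ifs with h1 h2 h2
  · exact absurd (h1.trans h2.symm) hxy
  · subst h1; omega
  · subst h2; omega
  · omega

/-- If `A` is an invertible 3×3 complex matrix with `det A = 1` and
`tr (A⁻¹) = conj (tr A)`, then (i) `det (A - λI) = -λ³ ⬝ conj (det (A - (1/conj λ) I))`
for every `λ ≠ 0`; in particular `λ` is an eigenvalue iff `1/conj λ` is, with the same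
algebraic multiplicity; and (ii) `A` has an eigenvalue on the unit circle. -/
theorem stmt_1 (A : Matrix (Fin 3) (Fin 3) ℂ) (hA : A.det = 1)
    (htr : (A⁻¹).trace = starRingEnd ℂ A.trace) :
    (∀ lam : ℂ, lam ≠ 0 →
      (A - lam • (1 : Matrix (Fin 3) (Fin 3) ℂ)).det =
        -lam ^ 3 *
          starRingEnd ℂ
            ((A - (1 / starRingEnd ℂ lam) • (1 : Matrix (Fin 3) (Fin 3) ℂ)).det)) ∧
    (∀ lam : ℂ, lam ≠ 0 →
      Polynomial.rootMultiplicity lam A.charpoly =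
        Polynomial.rootMultiplicity (1 / starRingEnd ℂ lam) A.charpoly) ∧
    (∃ lam : ℂ, ‖lam‖ = 1 ∧
      (A - lam • (1 : Matrix (Fin 3) (Fin 3) ℂ)).det = 0) := by
  set t := A.trace with ht
  have hadj : A.adjugate.trace = starRingEnd ℂ t := by
    rw [← htr, Matrix.inv_def, hA]; simp
  have hdet : ∀ x : ℂ, (A - x • (1 : Matrix (Fin 3) (Fin 3) ℂ)).det =
      1 - starRingEnd ℂ t * x + t * x ^ 2 - x ^ 3 := by
    intro x; rw [det3, hA, hadj]
  set p := A.charpoly with hp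
  have hpform : p = X ^ 3 - C t * X ^ 2 + C (starRingEnd ℂ t) * X - C 1 := by
    rw [hp, cp3, hadj, hA]
  have heval : ∀ x : ℂ, p.eval x = x ^ 3 - t * x ^ 2 + starRingEnd ℂ t * x - 1 := by
    intro x; rw [hpform]; simp
  have hmonic : p.Monic := A.charpoly_monic
  have hp0 : p ≠ 0 := hmonic.ne_zero
  have hdeg : p.natDegree = 3 := by simp [hp]
  have hsplits : p.Splits := IsAlgClosed.splits p
  have hcard : Multiset.card p.roots = 3 := by
    rw [splits_iff_card_roots.mp hsplits, hdeg]
  have hprod : p.roots.prod = 1 := by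
    have hfact := hsplits.eq_prod_roots_of_monic hmonic
    have h0 := heval 0
    rw [hfact] at h0
    simp [eval_multiset_prod, Multiset.map_map] at h0
    rw [hcard] at h0
    norm_num at h0
    exact h0
  have hnz : ∀ x ∈ p.roots, x ≠ 0 := by
    intro x hx h0
    have := isRoot_of_mem_roots hx
    rw [IsRoot, heval, h0] at this
    norm_num at this
  have hclose : ∀ x ∈ p.roots, ((starRingEnd ℂ) x)⁻¹ ∈ p.roots := by
    intro x hx
    have hx0 : x ≠ 0 := hnz x hx
    have hcx : (starRingEnd ℂ) x ≠ 0 := by simpa using hx0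
    have hr := isRoot_of_mem_roots hx
    rw [IsRoot, heval] at hr
    rw [mem_roots hp0, IsRoot, heval]
    have hcr : (starRingEnd ℂ) (x ^ 3 - t * x ^ 2 + starRingEnd ℂ t * x - 1) = 0 := by
      rw [hr]; simp
    simp only [map_sub, map_add, _root_.map_mul, map_pow, _root_.map_one,
      Complex.conj_conj] at hcr
    field_simp
    linear_combination -hcr
  -- count equality
  have hcount : ∀ x : ℂ, x ≠ 0 →
      p.roots.count x = p.roots.count (((starRingEnd ℂ) x)⁻¹) := by
    intro x hx0
    by_cases hfix : ((starRingEnd ℂ) x)⁻¹ = x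
    · rw [hfix]
    by_cases hxr : x ∈ p.roots
    · have hsr : ((starRingEnd ℂ) x)⁻¹ ∈ p.roots := hclose x hxr
      set y := ((starRingEnd ℂ) x)⁻¹ with hy
      have hxy : x ≠ y := fun h => hfix h.symm
      have hm1 : 1 ≤ p.roots.count x := Multiset.one_le_count_iff_mem.mpr hxr
      have hn1 : 1 ≤ p.roots.count y := Multiset.one_le_count_iff_mem.mpr hsr
      have hle : Multiset.replicate (p.roots.count x) x +
          Multiset.replicate (p.roots.count y) y ≤ p.roots :=
        repl_le _ _ _ hxy _ _ le_rfl le_rfl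
      have hsum : p.roots.count x + p.roots.count y ≤ 3 := by
        have h := Multiset.card_le_card hle
        rw [Multiset.card_add, Multiset.card_replicate, Multiset.card_replicate, hcard] at h
        exact h
      by_contra hne
      have heq3 : p.roots.count x + p.roots.count y = 3 := by omega
      have hS : Multiset.replicate (p.roots.count x) x +
          Multiset.replicate (p.roots.count y) y = p.roots := by
        apply Multiset.eq_of_le_of_card_le hle
        rw [Multiset.card_add, Multiset.card_replicate, Multiset.card_replicate, hcard, heq3]
      have hprod2 : x ^ (p.roots.count x) * y ^ (p.roots.count y) = 1 := by
        have hpr := hprod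
        rw [← hS, Multiset.prod_add, Multiset.prod_replicate, Multiset.prod_replicate] at hpr
        exact hpr
      have habs : ‖x‖ = 1 := by
        have habsy : ‖y‖ = (‖x‖)⁻¹ := by
          rw [hy, norm_inv, Complex.norm_conj]
        have h := congrArg (‖·‖) hprod2
        rw [norm_mul, norm_pow, norm_pow, habsy, norm_one] at h
        have hax : ‖x‖ ≠ 0 := by simpa using hx0
        have hcases : (p.roots.count x = 1 ∧ p.roots.count y = 2) ∨
            (p.roots.count x = 2 ∧ p.roots.count y = 1) := by omega
        rcases hcases with ⟨h1, h2⟩ | ⟨h1, h2⟩ <;> rw [h1, h2] at h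
        · field_simp at h
          exact (mul_left_cancel₀ hax (by linear_combination (-‖x‖) * h : ‖x‖ * ‖x‖ = ‖x‖ * 1))
        · field_simp at h
          exact (mul_left_cancel₀ hax (by linear_combination ‖x‖ * h : ‖x‖ * ‖x‖ = ‖x‖ * 1))
      exact hfix (sigma_fixed habs)
    · have hns : ((starRingEnd ℂ) x)⁻¹ ∉ p.roots := by
        intro h
        exact hxr (by simpa [sigma_invol] using hclose _ h)
      rw [Multiset.count_eq_zero_of_notMem hxr, Multiset.count_eq_zero_of_notMem hns]
  refine ⟨?_, ?_, ?_⟩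
  · intro lam hl
    have hcl : (starRingEnd ℂ) lam ≠ 0 := by simpa using hl
    rw [hdet, hdet]
    simp only [one_div, map_sub, map_add, _root_.map_mul, map_pow, _root_.map_one,
      map_inv₀, Complex.conj_conj]
    field_simp
    ring
  · intro lam hl
    have h := hcount lam hl
    rw [Polynomial.count_roots, Polynomial.count_roots] at h
    rw [one_div]
    exact h
  · obtain ⟨r, hr⟩ := Multiset.card_pos_iff_exists_mem.mp (by rw [hcard]; norm_num)
    by_cases habs : ‖r‖ = 1
    · refine ⟨r, habs, ?_⟩
      have h := isRoot_of_mem_roots hr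
      rw [IsRoot, heval] at h
      rw [hdet]
      linear_combination -h
    · have hr0 : r ≠ 0 := hnz r hr
      set y := ((starRingEnd ℂ) r)⁻¹ with hy
      have hyr : y ∈ p.roots := hclose r hr
      have hne : r ≠ y := by
        intro h
        apply habs
        have hcx : (starRingEnd ℂ) r ≠ 0 := by simpa using hr0
        have h1 : r * (starRingEnd ℂ) r = 1 := by
          rw [hy] at h
          field_simp at h
          linear_combination h
        have h2 := congrArg (‖·‖) h1
        rw [norm_mul, Complex.norm_conj, norm_one] at h2
        have h3 : (‖r‖ - 1) * (‖r‖ + 1) = 0 := by linear_combination h2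
        rcases mul_eq_zero.mp h3 with h4 | h4
        · linarith
        · linarith [norm_nonneg r]
      have hcnt : p.roots.count r = p.roots.count y := hcount r hr0
      have hm1 : 1 ≤ p.roots.count r := Multiset.one_le_count_iff_mem.mpr hr
      have hm : p.roots.count r = 1 := by
        by_contra hbig
        have hle : Multiset.replicate 2 r + Multiset.replicate 2 y ≤ p.roots :=
          repl_le _ _ _ hne 2 2 (by omega) (by omega)
        have h := Multiset.card_le_card hle
        rw [Multiset.card_add, Multiset.card_replicate, Multiset.card_replicate, hcard] at h
        omega
      have hle : Multiset.replicate 1 r + Multiset.replicate 1 y ≤ p.roots :=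
        repl_le _ _ _ hne 1 1 (by omega) (by omega)
      obtain ⟨T, hT⟩ := Multiset.le_iff_exists_add.mp hle
      have hTcard : Multiset.card T = 1 := by
        have h := congrArg Multiset.card hT
        rw [hcard, Multiset.card_add, Multiset.card_add, Multiset.card_replicate,
          Multiset.card_replicate] at h
        omega
      obtain ⟨s, hs⟩ := Multiset.card_eq_one.mp hTcard
      have hsy : r * y * s = 1 := by
        rw [← hprod, hT, hs, Multiset.prod_add, Multiset.prod_add, Multiset.prod_replicate,
          Multiset.prod_replicate, Multiset.prod_singleton]
        ring
      have hsabs : ‖s‖ = 1 := by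
        have h := congrArg (‖·‖) hsy
        rw [norm_mul, norm_mul, norm_one] at h
        have habsy : ‖y‖ = (‖r‖)⁻¹ := by
          rw [hy, norm_inv, Complex.norm_conj]
        rw [habsy] at h
        have hax : ‖r‖ ≠ 0 := by simpa using hr0
        rw [mul_inv_cancel₀ hax, one_mul] at h
        exact h
      have hsroot : s ∈ p.roots := by
        rw [hT, hs]
        simp
      refine ⟨s, hsabs, ?_⟩
      have h := isRoot_of_mem_roots hsroot
      rw [IsRoot, heval] at h
      rw [hdet]
      linear_combination -h
end

section
/- Let f : ℝ → ℝ be real-analytic and odd, with f(0) = f′(0) = f″(0) = 0 and f‴(0) > 0, and suppose f(x) → −∞ as x → +∞. Then f has only finitely many zeros in (0, ∞), it has at least one zero in (0, ∞), and the total number of zeros in (0, ∞) counted with multiplicity (the sum of the orders of vanishing of f at its positive zeros) is odd. -/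
open Filter Topology

private lemma aux_same_sign (f : ℝ → ℝ) (hc : Continuous f) (a b : ℝ) (hab : a ≤ b)
    (h : ∀ x ∈ Set.Icc a b, f x ≠ 0) : 0 < f a * f b := by
  rcases lt_trichotomy (f a * f b) 0 with hlt | heq | hgt
  · exfalso
    have h0 : (0:ℝ) ∈ Set.uIcc (f a) (f b) := by
      rcases mul_neg_iff.mp hlt with ⟨h1, h2⟩ | ⟨h1, h2⟩
      · exact Set.mem_uIcc.mpr (Or.inr ⟨h2.le, h1.le⟩)
      · exact Set.mem_uIcc.mpr (Or.inl ⟨h1.le, h2.le⟩)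
    obtain ⟨c, hc1, hc2⟩ := intermediate_value_uIcc (hc.continuousOn) h0
    exact h c (by rwa [Set.uIcc_of_le hab] at hc1) hc2
  · exfalso
    rcases mul_eq_zero.mp heq with h1 | h1
    exacts [h a ⟨le_refl a, hab⟩ h1, h b ⟨hab, le_refl b⟩ h1]
  · exact hgt

private lemma aux_local_factor (f : ℝ → ℝ) (x₀ : ℝ) (hf : AnalyticAt ℝ f x₀)
    (hnz : ¬ ∀ᶠ y in 𝓝 x₀, f y = 0) :
    ∃ (n : ℕ) (g : ℝ → ℝ), AnalyticAt ℝ g x₀ ∧ g x₀ ≠ 0 ∧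
      (∀ᶠ x in 𝓝 x₀, f x = (x - x₀) ^ n * g x) ∧
      sInf {k : ℕ | iteratedDeriv k f x₀ ≠ 0} = n ∧
      iteratedDeriv n f x₀ = (n.factorial : ℝ) * g x₀ := by
  obtain ⟨p, hp⟩ := hf
  have hpne : p ≠ 0 := fun h => hnz (hp.locally_zero_iff.mpr h)
  have hD : ∀ k : ℕ, iteratedDeriv k f x₀ = (k.factorial : ℝ) * p.coeff k := by
    intro k
    obtain ⟨r, hr⟩ := hp
    have h := hr.factorial_smul (1 : ℝ) k
    rw [iteratedDeriv_eq_iteratedFDeriv, ← h]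
    simp only [nsmul_eq_mul]
    rfl
  have hg0 : (Function.swap dslope x₀)^[p.order] f x₀ = p.coeff p.order := by
    have h := (hp.has_fpower_series_iterate_dslope_fslope p.order).coeff_zero (fun _ => 1)
    rw [← h]
    show (FormalMultilinearSeries.fslope^[p.order] p).coeff 0 = p.coeff p.order
    rw [FormalMultilinearSeries.coeff_iterate_fslope, zero_add]
  refine ⟨p.order, (Function.swap dslope x₀)^[p.order] f,
    ⟨_, hp.has_fpower_series_iterate_dslope_fslope p.order⟩,
    hp.iterate_dslope_fslope_ne_zero hpne, ?_, ?_, ?_⟩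
  · filter_upwards [Filter.Eventually.of_forall hp.eq_pow_order_mul_iterate_dslope] with x hx
    simpa [smul_eq_mul] using hx
  · have hset : {k : ℕ | iteratedDeriv k f x₀ ≠ 0} = {k | p k ≠ 0} := by
      ext k
      simp only [Set.mem_setOf_eq, hD k, mul_ne_zero_iff]
      constructor
      · intro ⟨_, h2⟩
        exact fun h => h2 (by simp [FormalMultilinearSeries.coeff_eq_zero, h])
      · intro h
        exact ⟨Nat.cast_ne_zero.mpr k.factorial_ne_zero,
          fun hc => h (FormalMultilinearSeries.coeff_eq_zero.mp hc)⟩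
    rw [hset]; rfl
  · rw [hD p.order, hg0]

private lemma aux_sign (f g : ℝ → ℝ) (x₀ : ℝ) (n : ℕ) (hg : AnalyticAt ℝ g x₀) (hg0 : g x₀ ≠ 0)
    (hfac : ∀ᶠ x in 𝓝 x₀, f x = (x - x₀) ^ n * g x) :
    ∃ δ > 0, ∀ u v : ℝ, x₀ - δ < u → u < x₀ → x₀ < v → v < x₀ + δ →
      f u ≠ 0 ∧ f v ≠ 0 ∧ 0 < (-1 : ℝ) ^ n * (f u * f v) := by
  have hcont : ContinuousAt g x₀ := hg.continuousAt
  have hev : ∀ᶠ x in 𝓝 x₀, 0 < g x * g x₀ := by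
    have hmem : {y : ℝ | 0 < y * g x₀} ∈ 𝓝 (g x₀) :=
      (isOpen_lt continuous_const (continuous_id.mul continuous_const)).mem_nhds
        (mul_self_pos.mpr hg0)
    exact hcont.preimage_mem_nhds hmem
  obtain ⟨δ, hδ, hball⟩ := Metric.eventually_nhds_iff_ball.mp (hfac.and hev)
  refine ⟨δ, hδ, fun u v h1 h2 h3 h4 => ?_⟩
  have hu : u ∈ Metric.ball x₀ δ := by
    rw [Metric.mem_ball, Real.dist_eq, abs_lt]; constructor <;> linarith
  have hv : v ∈ Metric.ball x₀ δ := by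
    rw [Metric.mem_ball, Real.dist_eq, abs_lt]; constructor <;> linarith
  obtain ⟨hfu, hgu⟩ := hball u hu
  obtain ⟨hfv, hgv⟩ := hball v hv
  have hgg : 0 < g u * g v := by nlinarith [mul_pos hgu hgv, mul_self_pos.mpr hg0]
  have hgune : g u ≠ 0 := fun h => by simp [h] at hgu
  have hgvne : g v ≠ 0 := fun h => by simp [h] at hgv
  refine ⟨by rw [hfu]; exact mul_ne_zero (pow_ne_zero _ (sub_ne_zero.mpr h2.ne)) hgune,
    by rw [hfv]; exact mul_ne_zero (pow_ne_zero _ (sub_ne_zero.mpr h3.ne')) hgvne, ?_⟩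
  rw [hfu, hfv]
  have e : (-1:ℝ)^n * ((u - x₀)^n * g u * ((v - x₀)^n * g v))
      = ((x₀ - u) * (v - x₀))^n * (g u * g v) := by
    rw [show x₀ - u = -1 * (u - x₀) by ring, mul_pow, mul_pow]
    ring
  have : 0 < ((x₀ - u) * (v - x₀))^n * (g u * g v) :=
    mul_pos (pow_pos (mul_pos (by linarith) (by linarith)) n) hgg
  calc (0:ℝ) < ((x₀ - u) * (v - x₀))^n * (g u * g v) := this
    _ = (-1:ℝ)^n * ((u - x₀)^n * g u * ((v - x₀)^n * g v)) := e.symm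

private lemma aux_parity (f : ℝ → ℝ) (hana : AnalyticOnNhd ℝ f Set.univ)
    (hc : Continuous f)
    (hnz : ∀ x : ℝ, ¬ ∀ᶠ y in 𝓝 x, f y = 0) :
    ∀ (T : Finset ℝ) (a b : ℝ), a < b → f a ≠ 0 → f b ≠ 0 →
      (∀ x : ℝ, x ∈ T ↔ (x ∈ Set.Ioo a b ∧ f x = 0)) →
      0 < (-1 : ℝ) ^ (∑ x ∈ T, sInf {k : ℕ | iteratedDeriv k f x ≠ 0}) * (f a * f b) := by
  intro T
  induction T using Finset.strongInduction with
  | _ T ih =>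
    intro a b hab ha hb hT
    rcases T.eq_empty_or_nonempty with rfl | hne
    · simp only [Finset.sum_empty, pow_zero, one_mul]
      apply aux_same_sign f hc a b hab.le
      intro x hx hfx
      rcases eq_or_lt_of_le hx.1 with rfl | hax
      · exact ha hfx
      rcases eq_or_lt_of_le hx.2 with rfl | hxb
      · exact hb hfx
      exact absurd ((hT x).mpr ⟨⟨hax, hxb⟩, hfx⟩) (Finset.notMem_empty x)
    · set x₀ := T.max' hne with hx₀def
      have hx₀T : x₀ ∈ T := T.max'_mem hne
      obtain ⟨hx₀ab, hfx₀⟩ := (hT x₀).mp hx₀T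
      obtain ⟨n, g, hg, hg0, hfac, hsinf, _⟩ :=
        aux_local_factor f x₀ (hana x₀ trivial) (hnz x₀)
      obtain ⟨δ, hδ, hsign⟩ := aux_sign f g x₀ n hg hg0 hfac
      set c : ℝ := max (x₀ - δ) ((insert a (T.erase x₀)).max' (by simp)) with hcdef
      have herase_lt : ∀ y ∈ T.erase x₀, y < x₀ := fun y hy =>
        lt_of_le_of_ne (T.le_max' y (Finset.mem_of_mem_erase hy)) (Finset.ne_of_mem_erase hy)
      have hclt : c < x₀ := by
        apply max_lt (by linarith)
        rw [Finset.max'_lt_iff]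
        intro y hy
        rcases Finset.mem_insert.mp hy with rfl | hy'
        · exact hx₀ab.1
        · exact herase_lt y hy'
      have hac : a ≤ c :=
        le_trans (Finset.le_max' _ a (Finset.mem_insert_self a _)) (le_max_right _ _)
      set u : ℝ := (c + x₀) / 2 with hudef
      have hcu : c < u := by simp only [hudef]; linarith
      have hux₀ : u < x₀ := by simp only [hudef]; linarith
      have hau : a < u := lt_of_le_of_lt hac hcu
      have hδu : x₀ - δ < u := lt_of_le_of_lt (le_max_left _ _) hcu
      set v : ℝ := (x₀ + min b (x₀ + δ)) / 2 with hvdef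
      have hx₀minb : x₀ < min b (x₀ + δ) := lt_min hx₀ab.2 (by linarith)
      have hx₀v : x₀ < v := by simp only [hvdef]; linarith
      have hvb : v < b := by
        have : v < min b (x₀ + δ) := by simp only [hvdef]; linarith
        exact lt_of_lt_of_le this (min_le_left _ _)
      have hvδ : v < x₀ + δ := by
        have : v < min b (x₀ + δ) := by simp only [hvdef]; linarith
        exact lt_of_lt_of_le this (min_le_right _ _)
      obtain ⟨hfu, hfv, hjump⟩ := hsign u v hδu hux₀ hx₀v hvδ
      have herase : ∀ x : ℝ, x ∈ T.erase x₀ ↔ (x ∈ Set.Ioo a u ∧ f x = 0) := by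
        intro x
        constructor
        · intro hx
          obtain ⟨⟨hax, _⟩, hfx⟩ := (hT x).mp (Finset.mem_of_mem_erase hx)
          refine ⟨⟨hax, ?_⟩, hfx⟩
          calc x ≤ (insert a (T.erase x₀)).max' (by simp) :=
                Finset.le_max' _ x (Finset.mem_insert_of_mem hx)
            _ ≤ c := le_max_right _ _
            _ < u := hcu
        · rintro ⟨⟨hax, hxu⟩, hfx⟩
          refine Finset.mem_erase.mpr ⟨by linarith, (hT x).mpr ⟨⟨hax, by linarith [hx₀ab.2]⟩, hfx⟩⟩
      have h1 := ih (T.erase x₀) (Finset.erase_ssubset hx₀T) a u hau ha hfu herase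
      have h3 : 0 < f v * f b := by
        apply aux_same_sign f hc v b hvb.le
        intro x hx hfx
        rcases eq_or_lt_of_le hx.2 with rfl | hxb
        · exact hb hfx
        have hxT : x ∈ T := (hT x).mpr ⟨⟨by linarith [hx.1, hx₀ab.1], hxb⟩, hfx⟩
        have : x ≤ x₀ := T.le_max' x hxT
        linarith [hx.1]
      have hsum : (∑ x ∈ T, sInf {k : ℕ | iteratedDeriv k f x ≠ 0})
          = n + ∑ x ∈ T.erase x₀, sInf {k : ℕ | iteratedDeriv k f x ≠ 0} := by
        rw [← Finset.add_sum_erase T _ hx₀T, hsinf]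
      rw [hsum, pow_add]
      set A : ℝ := (-1:ℝ) ^ n * (-1:ℝ) ^ (∑ x ∈ T.erase x₀, sInf {k : ℕ | iteratedDeriv k f x ≠ 0})
        * (f a * f b) with hAdef
      have hfu2 : 0 < f u ^ 2 := lt_of_le_of_ne (sq_nonneg _) (Ne.symm (pow_ne_zero 2 hfu))
      have hfv2 : 0 < f v ^ 2 := lt_of_le_of_ne (sq_nonneg _) (Ne.symm (pow_ne_zero 2 hfv))
      have hP : 0 < A * (f u ^ 2 * f v ^ 2) := by
        have hkey : A * (f u ^ 2 * f v ^ 2)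
            = ((-1:ℝ) ^ (∑ x ∈ T.erase x₀, sInf {k : ℕ | iteratedDeriv k f x ≠ 0}) * (f a * f u))
              * ((-1:ℝ) ^ n * (f u * f v)) * (f v * f b) := by
          rw [hAdef]; ring
        rw [hkey]
        exact mul_pos (mul_pos h1 hjump) h3
      have hA : 0 < A := by
        rcases mul_pos_iff.mp hP with ⟨h, _⟩ | ⟨_, h⟩
        · exact h
        · nlinarith [mul_pos hfu2 hfv2]
      calc (0:ℝ) < A := hA
        _ = (-1:ℝ) ^ n * (-1:ℝ) ^ (∑ x ∈ T.erase x₀, sInf {k : ℕ | iteratedDeriv k f x ≠ 0})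
            * (f a * f b) := hAdef

/-- If `f : ℝ → ℝ` is real-analytic and odd, vanishes to exactly third order at `0`
with `f‴(0) > 0`, and tends to `-∞` at `+∞`, then `f` has finitely many positive zeros,
at least one positive zero, and the number of positive zeros counted with multiplicity
(the sum of the orders of vanishing) is odd. -/
theorem stmt_3 (f : ℝ → ℝ)
    (hana : AnalyticOnNhd ℝ f Set.univ)
    (hodd : ∀ x : ℝ, f (-x) = -f x)
    (h0 : f 0 = 0) (h1 : deriv f 0 = 0) (h2 : iteratedDeriv 2 f 0 = 0)
    (h3 : 0 < iteratedDeriv 3 f 0)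
    (hinf : Tendsto f atTop atBot) :
    ∃ S : Finset ℝ,
      (∀ x : ℝ, x ∈ S ↔ 0 < x ∧ f x = 0) ∧
      S.Nonempty ∧
      Odd (∑ x ∈ S, sInf {n : ℕ | iteratedDeriv n f x ≠ 0}) := by
  have hc : Continuous f := continuousOn_univ.mp hana.continuousOn
  -- f is nowhere locally zero
  have hzero_iter : ∀ n : ℕ, iteratedDeriv n (fun _ : ℝ => (0:ℝ)) = fun _ => 0 := by
    intro n
    induction n with
    | zero => simp [iteratedDeriv_zero]
    | succ k ih => rw [iteratedDeriv_succ, ih]; funext x; simp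
  have hnz : ∀ x : ℝ, ¬ ∀ᶠ y in 𝓝 x, f y = 0 := by
    intro x hx
    have hfreq : ∃ᶠ y in 𝓝[≠] x, f y = 0 := (hx.filter_mono nhdsWithin_le_nhds).frequently
    have heq : Set.EqOn f 0 Set.univ :=
      hana.eqOn_zero_of_preconnected_of_frequently_eq_zero isPreconnected_univ trivial hfreq
    have hf0 : f = fun _ => (0:ℝ) := funext fun y => heq trivial
    rw [hf0, hzero_iter 3] at h3
    exact lt_irrefl 0 h3
  -- the order of vanishing at 0 is 3
  have hm0 : sInf {k : ℕ | iteratedDeriv k f 0 ≠ 0} = 3 := by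
    have h3mem : (3:ℕ) ∈ {k : ℕ | iteratedDeriv k f 0 ≠ 0} := h3.ne'
    apply le_antisymm (Nat.sInf_le h3mem)
    apply le_csInf ⟨3, h3mem⟩
    intro k hk
    by_contra hlt
    push_neg at hlt
    interval_cases k
    · exact hk (by simpa [iteratedDeriv_zero] using h0)
    · exact hk (by simpa [iteratedDeriv_one] using h1)
    · exact hk h2
  -- local factorization at 0
  obtain ⟨n0, g, hg, hg0ne, hfac, hsinf0, hder0⟩ :=
    aux_local_factor f 0 (hana 0 trivial) (hnz 0)
  have hn0 : n0 = 3 := by rw [← hsinf0, hm0]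
  subst hn0
  have hg0pos : 0 < g 0 := by
    rw [hder0] at h3
    have h6 : ((3:ℕ).factorial : ℝ) = 6 := by norm_num [Nat.factorial]
    rw [h6] at h3
    linarith
  -- positivity near 0⁺
  have hgev : ∀ᶠ x in 𝓝 (0:ℝ), 0 < g x :=
    hg.continuousAt.preimage_mem_nhds (isOpen_Ioi.mem_nhds hg0pos)
  obtain ⟨δ, hδ, hball⟩ := Metric.eventually_nhds_iff_ball.mp (hfac.and hgev)
  have hpos : ∀ x : ℝ, 0 < x → x < δ → 0 < f x := by
    intro x hx1 hx2
    have hmem : x ∈ Metric.ball (0:ℝ) δ := by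
      rw [Metric.mem_ball, Real.dist_eq, abs_lt]; constructor <;> linarith
    obtain ⟨hfx, hgx⟩ := hball x hmem
    rw [hfx, sub_zero]
    exact mul_pos (pow_pos hx1 3) hgx
  -- eventual negativity
  obtain ⟨M, hM⟩ := (hinf.eventually (eventually_lt_atBot (0:ℝ))).exists_forall_of_atTop
  -- the zero set is finite
  set Z : Set ℝ := {x : ℝ | 0 < x ∧ f x = 0} with hZdef
  have hZsub : Z ⊆ Set.Icc (δ/2) M ∩ f ⁻¹' {0} := by
    rintro x ⟨hx1, hx2⟩
    refine ⟨⟨?_, ?_⟩, hx2⟩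
    · by_contra hlt
      push_neg at hlt
      exact (hpos x hx1 (by linarith)).ne' hx2
    · by_contra hlt
      push_neg at hlt
      exact (hM x hlt.le).ne hx2
  have hKcompact : IsCompact (Set.Icc (δ/2) M ∩ f ⁻¹' {0}) :=
    isCompact_Icc.inter_right (isClosed_singleton.preimage hc)
  have hKdisc : DiscreteTopology (Set.Icc (δ/2) M ∩ f ⁻¹' {0} : Set ℝ) := by
    rw [discreteTopology_subtype_iff]
    intro x _
    have hev : ∀ᶠ y in 𝓝[≠] x, f y ≠ 0 := by
      rcases (hana x trivial).eventually_eq_zero_or_eventually_ne_zero with h | h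
      · exact absurd h (hnz x)
      · exact h
    rw [inf_principal_eq_bot]
    filter_upwards [hev] with y hy
    exact fun hyK => hy hyK.2
  have hZfin : Z.Finite := (hKcompact.finite (isDiscrete_iff_discreteTopology.mpr hKdisc)).subset hZsub
  have hodd_sum : Odd (∑ x ∈ hZfin.toFinset, sInf {n : ℕ | iteratedDeriv n f x ≠ 0}) := by
    have hfa : 0 < f (δ/2) := hpos (δ/2) (by linarith) (by linarith)
    set b : ℝ := max M (δ/2 + 1) with hbdef
    have hfb : f b < 0 := hM b (le_max_left _ _)
    have hab : δ/2 < b := lt_of_lt_of_le (by linarith) (le_max_right _ _)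
    have hT : ∀ x : ℝ, x ∈ hZfin.toFinset ↔ (x ∈ Set.Ioo (δ/2) b ∧ f x = 0) := by
      intro x
      rw [Set.Finite.mem_toFinset]
      constructor
      · rintro ⟨hx1, hx2⟩
        refine ⟨⟨?_, ?_⟩, hx2⟩
        · by_contra hle
          push_neg at hle
          exact (hpos x hx1 (by linarith)).ne' hx2
        · rcases lt_or_ge x b with h | h
          · exact h
          · exact absurd hx2 (hM x (le_trans (le_max_left _ _) h)).ne
      · rintro ⟨⟨hx1, _⟩, hx2⟩
        exact ⟨by linarith, hx2⟩
    have hpar := aux_parity f hana hc hnz hZfin.toFinset (δ/2) b hab hfa.ne' hfb.ne hT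
    rcases Nat.even_or_odd (∑ x ∈ hZfin.toFinset, sInf {k : ℕ | iteratedDeriv k f x ≠ 0})
      with hevn | hoddn
    · exfalso
      rw [hevn.neg_one_pow, one_mul] at hpar
      nlinarith
    · exact hoddn
  refine ⟨hZfin.toFinset, fun x => by simp [hZdef], ?_, hodd_sum⟩
  rcases hZfin.toFinset.eq_empty_or_nonempty with hemp | hne
  · exfalso
    rw [hemp] at hodd_sum
    simp at hodd_sum
  · exact hne
end

section
/- Let M be a function from a neighborhood of 0 in ℂ to the 3×3 complex matrices which is analytic, satisfies det M(μ) = 1 for all μ, is such that M(−μ) is similar to M(μ)⁻¹ for each μ, and such that M(0) − I has rank at most one. Then c(μ) := det(M(μ) − I) vanishes to order at least three at μ = 0, i.e. c(0) = c′(0) = c″(0) = 0, and a(μ) := tr M(μ) satisfies a(0) = 3 and a′(0) = 0. -/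
open Matrix Filter

/-- All 2×2 minors of a rank-≤-1 matrix vanish. -/
lemma stmt7_minor (N : Matrix (Fin 3) (Fin 3) ℂ) (h : N.rank ≤ 1) (i j k l : Fin 3) :
    N i k * N j l = N i l * N j k := by
  rw [Matrix.rank] at h
  obtain ⟨v, hv⟩ := finrank_le_one_iff.mp h
  have hcol : ∀ k : Fin 3, ∃ c : ℂ, ∀ i, N i k = c * (v : Fin 3 → ℂ) i := by
    intro k
    obtain ⟨c, hc⟩ := hv ⟨N.mulVec (Pi.single k 1), ⟨Pi.single k 1, rfl⟩⟩
    refine ⟨c, fun i => ?_⟩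
    have h2 := congrFun (congrArg Subtype.val hc) i
    simpa [Matrix.mulVec_single] using h2.symm
  obtain ⟨ck, hck⟩ := hcol k
  obtain ⟨cl, hcl⟩ := hcol l
  rw [hck i, hcl j, hcl i, hck j]; ring

lemma stmt7_det_zero (N : Matrix (Fin 3) (Fin 3) ℂ) (h : N.rank ≤ 1) : N.det = 0 := by
  by_contra h0
  have hu : IsUnit N := (Matrix.isUnit_iff_isUnit_det N).mpr (isUnit_iff_ne_zero.mpr h0)
  have := Matrix.rank_of_isUnit N hu
  rw [this] at h
  simp at h

/-- If `M(μ)` is a 3×3-matrix-valued function, analytic at `μ = 0`, with `det M(μ) = 1`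
and `M(-μ)` similar to `M(μ)⁻¹` for all `μ` near `0`, and `M(0) - I` has rank at most
one, then `c(μ) = det (M(μ) - I)` vanishes to order at least three at `μ = 0`, and
`a(μ) = tr M(μ)` satisfies `a(0) = 3`, `a′(0) = 0`. -/
theorem stmt_7 (M : ℂ → Matrix (Fin 3) (Fin 3) ℂ)
    (hana : ∀ i j : Fin 3, AnalyticAt ℂ (fun μ => M μ i j) 0)
    (hdet : ∀ᶠ μ in nhds (0 : ℂ), (M μ).det = 1)
    (hsim : ∀ᶠ μ in nhds (0 : ℂ), ∃ P : Matrix (Fin 3) (Fin 3) ℂ,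
      IsUnit P.det ∧ M (-μ) = P * (M μ)⁻¹ * P⁻¹)
    (hrank : (M 0 - 1).rank ≤ 1) :
    ((M 0 - 1).det = 0 ∧
      deriv (fun μ => (M μ - 1).det) 0 = 0 ∧
      iteratedDeriv 2 (fun μ => (M μ - 1).det) 0 = 0) ∧
    ((M 0).trace = 3 ∧ deriv (fun μ => (M μ).trace) 0 = 0) := by
  -- notation
  have hq := stmt7_minor _ hrank
  have hN0 : (M 0 - 1).det = 0 := stmt7_det_zero _ hrank
  -- specialized minors, in terms of the entries of `M 0`
  have q1 : (M 0 1 1 - 1) * (M 0 2 2 - 1) = M 0 1 2 * M 0 2 1 := by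
    have := hq 1 2 1 2; simpa only [Matrix.sub_apply, Matrix.one_apply, Fin.reduceEq, reduceIte, sub_zero] using this
  have q2 : M 0 1 0 * (M 0 2 2 - 1) = M 0 1 2 * M 0 2 0 := by
    have := hq 1 2 0 2; simpa only [Matrix.sub_apply, Matrix.one_apply, Fin.reduceEq, reduceIte, sub_zero] using this
  have q3 : M 0 1 0 * M 0 2 1 = (M 0 1 1 - 1) * M 0 2 0 := by
    have := hq 1 2 0 1; simpa only [Matrix.sub_apply, Matrix.one_apply, Fin.reduceEq, reduceIte, sub_zero] using this
  have q4 : M 0 0 1 * (M 0 2 2 - 1) = M 0 0 2 * M 0 2 1 := by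
    have := hq 0 2 1 2; simpa only [Matrix.sub_apply, Matrix.one_apply, Fin.reduceEq, reduceIte, sub_zero] using this
  have q5 : (M 0 0 0 - 1) * (M 0 2 2 - 1) = M 0 0 2 * M 0 2 0 := by
    have := hq 0 2 0 2; simpa only [Matrix.sub_apply, Matrix.one_apply, Fin.reduceEq, reduceIte, sub_zero] using this
  have q6 : (M 0 0 0 - 1) * M 0 2 1 = M 0 0 1 * M 0 2 0 := by
    have := hq 0 2 0 1; simpa only [Matrix.sub_apply, Matrix.one_apply, Fin.reduceEq, reduceIte, sub_zero] using this
  have q7 : M 0 0 1 * M 0 1 2 = M 0 0 2 * (M 0 1 1 - 1) := by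
    have := hq 0 1 1 2; simpa only [Matrix.sub_apply, Matrix.one_apply, Fin.reduceEq, reduceIte, sub_zero] using this
  have q8 : (M 0 0 0 - 1) * M 0 1 2 = M 0 0 2 * M 0 1 0 := by
    have := hq 0 1 0 2; simpa only [Matrix.sub_apply, Matrix.one_apply, Fin.reduceEq, reduceIte, sub_zero] using this
  have q9 : (M 0 0 0 - 1) * (M 0 1 1 - 1) = M 0 0 1 * M 0 1 0 := by
    have := hq 0 1 0 1; simpa only [Matrix.sub_apply, Matrix.one_apply, Fin.reduceEq, reduceIte, sub_zero] using this
  -- det (M 0) = 1, expanded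
  have h1 : (M 0).det = 1 := hdet.self_of_nhds
  rw [Matrix.det_fin_three] at h1
  -- det (M 0 - 1) = 0, expanded in entries of M 0
  have hN0' : (M 0 0 0 - 1) * ((M 0 1 1 - 1) * (M 0 2 2 - 1)) -
      (M 0 0 0 - 1) * (M 0 1 2 * M 0 2 1) - M 0 0 1 * (M 0 1 0 * (M 0 2 2 - 1)) +
      M 0 0 1 * (M 0 1 2 * M 0 2 0) + M 0 0 2 * (M 0 1 0 * M 0 2 1) -
      M 0 0 2 * ((M 0 1 1 - 1) * M 0 2 0) = 0 := by
    have h := hN0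
    rw [Matrix.det_fin_three] at h
    simp only [Matrix.sub_apply, Matrix.one_apply, Fin.reduceEq, reduceIte, sub_zero] at h
    linear_combination h
  -- trace at 0
  have htr3 : (M 0).trace = 3 := by
    rw [Matrix.trace_fin_three]
    linear_combination h1 - q1 - q5 - q9 - hN0'
  -- the trace function and its analyticity
  set a : ℂ → ℂ := fun μ => (M μ).trace with ha_def
  have ha : AnalyticAt ℂ a 0 := by
    have : a = fun μ => M μ 0 0 + M μ 1 1 + M μ 2 2 := by
      funext μ; rw [ha_def]; simp [Matrix.trace_fin_three]
    rw [this]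
    exact ((hana 0 0).add (hana 1 1)).add (hana 2 2)
  -- derivatives of the entries
  have hd : ∀ i j : Fin 3, HasDerivAt (fun μ => M μ i j)
      (deriv (fun μ => M μ i j) 0) 0 := fun i j => (hana i j).differentiableAt.hasDerivAt
  set d : Fin 3 → Fin 3 → ℂ := fun i j => deriv (fun μ => M μ i j) 0 with hd_def
  -- the determinant function rewritten
  have hfun : (fun μ => (M μ - 1).det) = fun μ =>
      (M μ 0 0 - 1) * ((M μ 1 1 - 1) * (M μ 2 2 - 1)) -
      (M μ 0 0 - 1) * (M μ 1 2 * M μ 2 1) - M μ 0 1 * (M μ 1 0 * (M μ 2 2 - 1)) +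
      M μ 0 1 * (M μ 1 2 * M μ 2 0) + M μ 0 2 * (M μ 1 0 * M μ 2 1) -
      M μ 0 2 * ((M μ 1 1 - 1) * M μ 2 0) := by
    funext μ
    rw [Matrix.det_fin_three]
    simp only [Matrix.sub_apply, Matrix.one_apply, Fin.reduceEq, reduceIte, sub_zero]
    ring
  -- c′(0) via cofactor expansion
  have Hc : HasDerivAt (fun μ => (M μ - 1).det)
      (d 0 0 * ((M 0 1 1 - 1) * (M 0 2 2 - 1) - M 0 1 2 * M 0 2 1)
        - d 0 1 * (M 0 1 0 * (M 0 2 2 - 1) - M 0 1 2 * M 0 2 0)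
        + d 0 2 * (M 0 1 0 * M 0 2 1 - (M 0 1 1 - 1) * M 0 2 0)
        - d 1 0 * (M 0 0 1 * (M 0 2 2 - 1) - M 0 0 2 * M 0 2 1)
        + d 1 1 * ((M 0 0 0 - 1) * (M 0 2 2 - 1) - M 0 0 2 * M 0 2 0)
        - d 1 2 * ((M 0 0 0 - 1) * M 0 2 1 - M 0 0 1 * M 0 2 0)
        + d 2 0 * (M 0 0 1 * M 0 1 2 - M 0 0 2 * (M 0 1 1 - 1))
        - d 2 1 * ((M 0 0 0 - 1) * M 0 1 2 - M 0 0 2 * M 0 1 0)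
        + d 2 2 * ((M 0 0 0 - 1) * (M 0 1 1 - 1) - M 0 0 1 * M 0 1 0)) 0 := by
    rw [hfun]
    have T1 := ((hd 0 0).sub_const 1).mul (((hd 1 1).sub_const 1).mul ((hd 2 2).sub_const 1))
    have T2 := ((hd 0 0).sub_const 1).mul ((hd 1 2).mul (hd 2 1))
    have T3 := (hd 0 1).mul ((hd 1 0).mul ((hd 2 2).sub_const 1))
    have T4 := (hd 0 1).mul ((hd 1 2).mul (hd 2 0))
    have T5 := (hd 0 2).mul ((hd 1 0).mul (hd 2 1))
    have T6 := (hd 0 2).mul (((hd 1 1).sub_const 1).mul (hd 2 0))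
    have Tot := ((((T1.sub T2).sub T3).add T4).add T5).sub T6
    refine Tot.congr_deriv ?_
    try simp only [hd_def, Pi.mul_apply, Pi.sub_apply]
    ring
  have hc'0 : deriv (fun μ => (M μ - 1).det) 0 = 0 := by
    rw [Hc.deriv]
    linear_combination d 0 0 * q1 - d 0 1 * q2 + d 0 2 * q3 - d 1 0 * q4 + d 1 1 * q5
      - d 1 2 * q6 + d 2 0 * q7 - d 2 1 * q8 + d 2 2 * q9
  -- the eventual identity c(μ) = a(μ) - a(-μ)
  have heq : (fun μ => (M μ - 1).det) =ᶠ[nhds (0 : ℂ)] fun μ => a μ - a (-μ) := by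
    filter_upwards [hdet, hsim] with μ h1' h2'
    obtain ⟨P, hP, hMP⟩ := h2'
    have hadj : (M μ)⁻¹ = (M μ).adjugate := by
      rw [Matrix.inv_def, h1', Ring.inverse_one, one_smul]
    have htrinv : (M (-μ)).trace = ((M μ)⁻¹).trace := by
      rw [hMP, Matrix.trace_mul_comm, ← Matrix.mul_assoc, Matrix.nonsing_inv_mul P hP,
        Matrix.one_mul]
    simp only [ha_def]
    rw [htrinv, hadj]
    rw [Matrix.det_fin_three] at h1'
    rw [Matrix.det_fin_three, Matrix.adjugate_fin_three, Matrix.trace_fin_three,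
      Matrix.trace_fin_three]
    simp only [Matrix.sub_apply, Matrix.one_apply, Fin.reduceEq, reduceIte, sub_zero,
      Matrix.cons_val', Matrix.cons_val_zero, Matrix.cons_val_one, Matrix.head_cons,
      Matrix.empty_val', Matrix.cons_val_fin_one, Matrix.cons_val_two, Matrix.tail_cons,
      Matrix.of_apply, Matrix.head_fin_const]
    linear_combination h1'
  -- derivative of a μ - a (-μ) at 0 is 2 a′(0)
  have hA : HasDerivAt a (deriv a 0) 0 := ha.differentiableAt.hasDerivAt
  have hB : HasDerivAt (fun μ => a (-μ)) (-(deriv a 0)) 0 := by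
    have h0 : HasDerivAt a (deriv a 0) (-0 : ℂ) := by simpa using hA
    have := h0.comp 0 (hasDerivAt_neg (0 : ℂ))
    exact this.congr_deriv (by ring)
  have hg : HasDerivAt (fun μ => a μ - a (-μ)) (2 * deriv a 0) 0 := by
    have := hA.sub hB
    exact this.congr_deriv (by ring)
  have h2a : 2 * deriv a 0 = 0 := by
    rw [← hg.deriv, ← heq.deriv_eq, hc'0]
  have ha'0 : deriv a 0 = 0 :=
    (mul_eq_zero.mp h2a).resolve_left (by norm_num)
  -- second derivative
  have hc''0 : iteratedDeriv 2 (fun μ => (M μ - 1).det) 0 = 0 := by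
    rw [show (2 : ℕ) = 1 + 1 from rfl, iteratedDeriv_succ, iteratedDeriv_one]
    -- deriv c =ᶠ deriv g near 0
    have hder_ev := heq.deriv
    -- a is analytic near 0
    have hev : ∀ᶠ z in nhds (0 : ℂ), AnalyticAt ℂ a z := ha.eventually_analyticAt
    have hnegt : Tendsto (fun μ : ℂ => -μ) (nhds 0) (nhds 0) := by
      simpa using (continuous_neg.tendsto (0 : ℂ))
    have hev' : ∀ᶠ μ in nhds (0 : ℂ), AnalyticAt ℂ a (-μ) := hnegt.eventually hev
    have hg_ev : deriv (fun μ => a μ - a (-μ)) =ᶠ[nhds (0 : ℂ)]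
        fun μ => deriv a μ + deriv a (-μ) := by
      filter_upwards [hev, hev'] with μ h1' h2'
      have hA' : HasDerivAt a (deriv a μ) μ := h1'.differentiableAt.hasDerivAt
      have hB' : HasDerivAt (fun t => a (-t)) (-(deriv a (-μ))) μ := by
        have h0 : HasDerivAt a (deriv a (-μ)) (-μ) := h2'.differentiableAt.hasDerivAt
        have := h0.comp μ (hasDerivAt_neg μ)
        exact this.congr_deriv (by ring)
      have := (hA'.sub hB').deriv
      exact this.trans (by ring)
    have hkey : deriv (fun μ => (M μ - 1).det) =ᶠ[nhds (0 : ℂ)]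
        fun μ => deriv a μ + deriv a (-μ) := hder_ev.trans hg_ev
    rw [hkey.deriv_eq]
    -- deriv a is analytic at 0
    have ha' : AnalyticAt ℂ (deriv a) 0 := by
      have hOn : AnalyticOnNhd ℂ a {z | AnalyticAt ℂ a z} := fun z hz => hz
      exact hOn.deriv 0 ha
    have hA2 : HasDerivAt (deriv a) (deriv (deriv a) 0) 0 := ha'.differentiableAt.hasDerivAt
    have hB2 : HasDerivAt (fun μ => deriv a (-μ)) (-(deriv (deriv a) 0)) 0 := by
      have h0 : HasDerivAt (deriv a) (deriv (deriv a) 0) (-0 : ℂ) := by simpa using hA2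
      have := h0.comp 0 (hasDerivAt_neg (0 : ℂ))
      exact this.congr_deriv (by ring)
    have := (hA2.add hB2).deriv
    exact this.trans (by ring)
  -- the trace derivative
  have hatr : deriv (fun μ => (M μ).trace) 0 = 0 := ha'0
  exact ⟨⟨hN0, hc'0, hc''0⟩, htr3, hatr⟩
end

section
/- Let f : ℝ → ℝ be C¹ with antiderivative F (F′ = f), let D ⊆ ℝ³ be open with parameters (a,E,c), and let u : ℝ × D → ℝ be C² in x and C¹ in the parameters (with ∂ₓu also C¹ in the parameters), such that for every parameter value both u″ + f(u) − c·u = a and (1/2)(∂ₓu)² + F(u) − (c/2)u² − a·u = E hold identically in x. Then the following Wronskian identities hold identically: ∂ₓu·∂ₓ(∂u/∂E) − ∂ₓ²u·(∂u/∂E) = 1; ∂ₓu·∂ₓ(∂u/∂a) − ∂ₓ²u·(∂u/∂a) = u; and ∂ₓu·∂ₓ(∂u/∂c) − ∂ₓ²u·(∂u/∂c) = u²/2. -/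
open Set

open intervalIntegral MeasureTheory


lemma key_swap (D : Set (ℝ × ℝ × ℝ)) (hD : IsOpen D)
    (u : ℝ × ℝ × ℝ → ℝ → ℝ)
    (hu2 : ∀ p ∈ D, ContDiff ℝ 2 (u p))
    (huC1 : ContDiffOn ℝ 1 (fun q : (ℝ × ℝ × ℝ) × ℝ => u q.1 q.2)
      (D ×ˢ (univ : Set ℝ)))
    (huxC1 : ContDiffOn ℝ 1 (fun q : (ℝ × ℝ × ℝ) × ℝ => deriv (u q.1) q.2)
      (D ×ˢ (univ : Set ℝ)))
    (p : ℝ × ℝ × ℝ) (hp : p ∈ D) (v : ℝ × ℝ × ℝ) (x : ℝ) :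
    ∃ A B : ℝ,
      HasDerivAt (fun s : ℝ => u (p + s • v) x) A 0 ∧
      HasDerivAt (fun s : ℝ => deriv (u (p + s • v)) x) B 0 ∧
      HasDerivAt (fun y : ℝ => deriv (fun s : ℝ => u (p + s • v) y) 0) B x := by
  classical
  set I : Set ℝ := (fun s : ℝ => p + s • v) ⁻¹' D with hI
  have hIopen : IsOpen I := hD.preimage (by fun_prop)
  have h0I : (0 : ℝ) ∈ I := by simp [hI, hp]
  set W : ℝ × ℝ → ℝ := fun z => u (p + z.1 • v) z.2 with hWdef
  set G : ℝ × ℝ → ℝ := fun z => deriv (u (p + z.1 • v)) z.2 with hGdef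
  have hφ : ContDiff ℝ 1 (fun z : ℝ × ℝ => ((p + z.1 • v, z.2) : (ℝ × ℝ × ℝ) × ℝ)) := by
    fun_prop
  have hmaps : MapsTo (fun z : ℝ × ℝ => ((p + z.1 • v, z.2) : (ℝ × ℝ × ℝ) × ℝ))
      (I ×ˢ univ) (D ×ˢ univ) := by
    rintro ⟨s, t⟩ ⟨hs, -⟩
    exact ⟨hs, mem_univ _⟩
  have hIU : IsOpen (I ×ˢ (univ : Set ℝ)) := hIopen.prod isOpen_univ
  have hW1 : ContDiffOn ℝ 1 W (I ×ˢ univ) :=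
    huC1.comp hφ.contDiffOn hmaps
  have hG1 : ContDiffOn ℝ 1 G (I ×ˢ univ) :=
    huxC1.comp hφ.contDiffOn hmaps
  set HW : ℝ × ℝ → ℝ := fun z => fderiv ℝ W z (1, 0) with hHWdef
  set HG : ℝ × ℝ → ℝ := fun z => fderiv ℝ G z (1, 0) with hHGdef
  -- partial derivatives in the parameter direction
  have hpartW : ∀ s₀ t : ℝ, s₀ ∈ I →
      HasDerivAt (fun s => W (s, t)) (HW (s₀, t)) s₀ := by
    intro s₀ t hs₀
    have hd : DifferentiableAt ℝ W (s₀, t) :=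
      (hW1.differentiableOn one_ne_zero).differentiableAt
        (hIU.mem_nhds ⟨hs₀, mem_univ _⟩)
    have h1 : HasDerivAt (fun s : ℝ => ((s, t) : ℝ × ℝ)) (1, 0) s₀ :=
      (hasDerivAt_id s₀).prodMk (hasDerivAt_const s₀ t)
    exact hd.hasFDerivAt.comp_hasDerivAt s₀ h1
  have hpartG : ∀ s₀ t : ℝ, s₀ ∈ I →
      HasDerivAt (fun s => G (s, t)) (HG (s₀, t)) s₀ := by
    intro s₀ t hs₀
    have hd : DifferentiableAt ℝ G (s₀, t) :=
      (hG1.differentiableOn one_ne_zero).differentiableAt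
        (hIU.mem_nhds ⟨hs₀, mem_univ _⟩)
    have h1 : HasDerivAt (fun s : ℝ => ((s, t) : ℝ × ℝ)) (1, 0) s₀ :=
      (hasDerivAt_id s₀).prodMk (hasDerivAt_const s₀ t)
    exact hd.hasFDerivAt.comp_hasDerivAt s₀ h1
  have hHGcont : ContinuousOn HG (I ×ˢ univ) :=
    (hG1.continuousOn_fderiv_of_isOpen hIU le_rfl).clm_apply continuousOn_const
  have hHG0cont : Continuous (fun t => HG (0, t)) := by
    rw [← continuousOn_univ]
    exact hHGcont.comp (Continuous.continuousOn (by fun_prop))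
      (fun t _ => ⟨h0I, mem_univ _⟩)
  -- FTC representation
  have hFTC : ∀ s ∈ I, ∀ y : ℝ,
      u (p + s • v) y = u (p + s • v) 0 + ∫ t in (0:ℝ)..y, G (s, t) := by
    intro s hs y
    have hC2 := hu2 (p + s • v) hs
    have hd : ∀ t : ℝ, HasDerivAt (u (p + s • v)) (G (s, t)) t := fun t =>
      ((hC2.differentiable two_ne_zero) t).hasDerivAt
    have hcont : Continuous (deriv (u (p + s • v))) := hC2.continuous_deriv one_le_two
    have := intervalIntegral.integral_eq_sub_of_hasDerivAt (f := u (p + s • v))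
      (fun t _ => hd t) (hcont.intervalIntegrable 0 y)
    rw [this]; ring
  -- a ball around 0 inside I
  obtain ⟨ε, hε, hball⟩ := Metric.isOpen_iff.1 hIopen 0 h0I
  set δ : ℝ := ε / 2 with hδdef
  have hδ : 0 < δ := by positivity
  have hcb : Metric.closedBall (0:ℝ) δ ⊆ I := fun z hz =>
    hball (lt_of_le_of_lt (Metric.mem_closedBall.1 hz) (by simp [hδdef]; linarith))
  -- derivative of the integral term
  have hint : ∀ y : ℝ, HasDerivAt (fun s => ∫ t in (0:ℝ)..y, G (s, t))
      (∫ t in (0:ℝ)..y, HG (0, t)) 0 := by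
    intro y
    have hKcomp : IsCompact (Metric.closedBall (0:ℝ) δ ×ˢ uIcc (0:ℝ) y) :=
      (isCompact_closedBall _ _).prod isCompact_uIcc
    have hKsub : Metric.closedBall (0:ℝ) δ ×ˢ uIcc (0:ℝ) y ⊆ I ×ˢ univ := by
      rintro ⟨s, t⟩ ⟨hs, -⟩
      exact ⟨hcb hs, mem_univ _⟩
    obtain ⟨C, hC⟩ := hKcomp.exists_bound_of_continuousOn (hHGcont.mono hKsub)
    have hres := intervalIntegral.hasDerivAt_integral_of_dominated_loc_of_deriv_le
      (F := fun s t => G (s, t)) (F' := fun s t => HG (s, t)) (x₀ := (0:ℝ))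
      (a := (0:ℝ)) (b := y) (bound := fun _ => C) (μ := volume) (Metric.ball_mem_nhds 0 hδ)
      ?_ ?_ ?_ ?_ ?_ ?_
    · exact hres.2
    · refine Filter.Eventually.of_forall (fun s => ?_)
      exact (measurable_deriv (u (p + s • v))).aestronglyMeasurable
    · have h0 : ((0:ℝ) : ℝ) ∈ I := h0I
      have : Continuous (fun t => G ((0:ℝ), t)) := by
        have := (hu2 (p + (0:ℝ) • v) (by simpa using hp)).continuous_deriv one_le_two
        simpa [hGdef] using this
      exact this.intervalIntegrable 0 y
    · exact hHG0cont.aestronglyMeasurable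
    · refine Filter.Eventually.of_forall (fun t ht s hs => ?_)
      exact hC (s, t) ⟨Metric.ball_subset_closedBall hs, uIoc_subset_uIcc ht⟩
    · exact intervalIntegrable_const
    · refine Filter.Eventually.of_forall (fun t ht s hs => ?_)
      exact hpartG s t (hcb (Metric.ball_subset_closedBall hs))
  -- formula for the parameter-partial of u
  have hP : ∀ y : ℝ, deriv (fun s : ℝ => u (p + s • v) y) 0
      = HW (0, 0) + ∫ t in (0:ℝ)..y, HG (0, t) := by
    intro y
    have hsum : HasDerivAt (fun s => W (s, 0) + ∫ t in (0:ℝ)..y, G (s, t))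
        (HW (0, 0) + ∫ t in (0:ℝ)..y, HG (0, t)) 0 :=
      (hpartW 0 0 h0I).add (hint y)
    have heq : (fun s : ℝ => u (p + s • v) y)
        =ᶠ[nhds (0:ℝ)] (fun s => W (s, 0) + ∫ t in (0:ℝ)..y, G (s, t)) := by
      filter_upwards [hIopen.mem_nhds h0I] with s hs
      exact hFTC s hs y
    exact (hsum.congr_of_eventuallyEq heq).deriv
  refine ⟨HW (0, x), HG (0, x), hpartW 0 x h0I, hpartG 0 x h0I, ?_⟩
  have hfun : (fun y : ℝ => deriv (fun s : ℝ => u (p + s • v) y) 0)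
      = fun y => HW (0, 0) + ∫ t in (0:ℝ)..y, HG (0, t) := funext hP
  rw [hfun]
  simpa [Pi.add_def] using (hasDerivAt_const x (HW (0, 0))).add
    (intervalIntegral.integral_hasDerivAt_right
      (hHG0cont.intervalIntegrable 0 x)
      hHG0cont.aestronglyMeasurable.stronglyMeasurableAtFilter
      hHG0cont.continuousAt)

lemma key2 (f F : ℝ → ℝ)
    (hF : ∀ x : ℝ, HasDerivAt F (f x) x)
    (D : Set (ℝ × ℝ × ℝ)) (hD : IsOpen D)
    (u : ℝ × ℝ × ℝ → ℝ → ℝ)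
    (hu2 : ∀ p ∈ D, ContDiff ℝ 2 (u p))
    (huC1 : ContDiffOn ℝ 1 (fun q : (ℝ × ℝ × ℝ) × ℝ => u q.1 q.2)
      (D ×ˢ (univ : Set ℝ)))
    (huxC1 : ContDiffOn ℝ 1 (fun q : (ℝ × ℝ × ℝ) × ℝ => deriv (u q.1) q.2)
      (D ×ˢ (univ : Set ℝ)))
    (hODE : ∀ p ∈ D, ∀ x : ℝ,
      deriv (deriv (u p)) x + f (u p x) - p.2.2 * u p x = p.1)
    (hEn : ∀ p ∈ D, ∀ x : ℝ,
      1 / 2 * (deriv (u p) x) ^ 2 + F (u p x) - p.2.2 / 2 * (u p x) ^ 2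
        - p.1 * u p x = p.2.1)
    (p : ℝ × ℝ × ℝ) (hp : p ∈ D) (v : ℝ × ℝ × ℝ) (x : ℝ) :
    ∃ A B : ℝ,
      HasDerivAt (fun s : ℝ => u (p + s • v) x) A 0 ∧
      HasDerivAt (fun y : ℝ => deriv (fun s : ℝ => u (p + s • v) y) 0) B x ∧
      deriv (u p) x * B - deriv (deriv (u p)) x * A
        = v.2.1 + v.1 * u p x + v.2.2 * (u p x) ^ 2 / 2 := by
  obtain ⟨A, B, hA, hBs, hBx⟩ := key_swap D hD u hu2 huC1 huxC1 p hp v x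
  refine ⟨A, B, hA, hBx, ?_⟩
  have hIopen : IsOpen ((fun s : ℝ => p + s • v) ⁻¹' D) := hD.preimage (by fun_prop)
  have h0I : (0 : ℝ) ∈ (fun s : ℝ => p + s • v) ⁻¹' D := by simp [hp]
  -- derivative of the energy along the parameter line
  have t1 := (hBs.pow 2).const_mul (1/2 : ℝ)
  have t2 := (hF ((fun s : ℝ => u (p + s • v) x) 0)).comp 0 hA
  simp only [Function.comp_def] at t2
  have h31 : HasDerivAt (fun s : ℝ => (p.2.2 + s * v.2.2) / 2) (1 * v.2.2 / 2) 0 :=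
    (((hasDerivAt_id (0:ℝ)).mul_const v.2.2).const_add p.2.2).div_const 2
  have t3 := h31.mul (hA.pow 2)
  have h41 : HasDerivAt (fun s : ℝ => p.1 + s * v.1) (1 * v.1) 0 :=
    ((hasDerivAt_id (0:ℝ)).mul_const v.1).const_add p.1
  have t4 := h41.mul hA
  have hval := ((t1.add t2).sub t3).sub t4
  have rhs' := hval.congr_of_eventuallyEq
    (f₁ := fun s : ℝ => p.2.1 + s * v.2.1) ?_
  · have hrhs : HasDerivAt (fun s : ℝ => p.2.1 + s * v.2.1) (1 * v.2.1) 0 :=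
      ((hasDerivAt_id (0:ℝ)).mul_const v.2.1).const_add p.2.1
    have hD0 := rhs'.unique hrhs
    have hODE' := hODE p hp x
    simp only [Function.comp, zero_smul, add_zero, pow_one, zero_mul, mul_zero,
      one_mul, Nat.cast_ofNat, Pi.pow_apply] at hD0
    linear_combination hD0 - A * hODE'
  · filter_upwards [hIopen.mem_nhds h0I] with s hs
    have hE := hEn (p + s • v) hs x
    have hc1 : (p + s • v).1 = p.1 + s * v.1 := by simp
    have hc2 : (p + s • v).2.1 = p.2.1 + s * v.2.1 := by simp
    have hc3 : (p + s • v).2.2 = p.2.2 + s * v.2.2 := by simp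
    rw [hc1, hc2, hc3] at hE
    simp only [Pi.add_apply, Pi.sub_apply, Pi.mul_apply, Pi.pow_apply]
    linarith [hE]



/-- Wronskian identities for the traveling wave family: if `u(x; a, E, c)` solves
`u″ + f(u) - cu = a` with first integral `(1/2)(uₓ)² + F(u) - (c/2)u² - au = E`
(`F′ = f`, `f` of class `C¹`), with `u` of class `C²` in `x`, `C¹` in the parameters
and `uₓ` also `C¹` in the parameters, then
`uₓ ∂ₓ(∂u/∂E) - uₓₓ (∂u/∂E) = 1`, `uₓ ∂ₓ(∂u/∂a) - uₓₓ (∂u/∂a) = u`, and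
`uₓ ∂ₓ(∂u/∂c) - uₓₓ (∂u/∂c) = u²/2`. Parameters: `p = (a, E, c)`. -/
theorem stmt_11 (f F : ℝ → ℝ) (hf : ContDiff ℝ 1 f)
    (hF : ∀ x : ℝ, HasDerivAt F (f x) x)
    (D : Set (ℝ × ℝ × ℝ)) (hD : IsOpen D)
    (u : ℝ × ℝ × ℝ → ℝ → ℝ)
    (hu2 : ∀ p ∈ D, ContDiff ℝ 2 (u p))
    (huC1 : ContDiffOn ℝ 1 (fun q : (ℝ × ℝ × ℝ) × ℝ => u q.1 q.2)
      (D ×ˢ (univ : Set ℝ)))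
    (huxC1 : ContDiffOn ℝ 1 (fun q : (ℝ × ℝ × ℝ) × ℝ => deriv (u q.1) q.2)
      (D ×ˢ (univ : Set ℝ)))
    (hODE : ∀ p ∈ D, ∀ x : ℝ,
      deriv (deriv (u p)) x + f (u p x) - p.2.2 * u p x = p.1)
    (hEn : ∀ p ∈ D, ∀ x : ℝ,
      1 / 2 * (deriv (u p) x) ^ 2 + F (u p x) - p.2.2 / 2 * (u p x) ^ 2
        - p.1 * u p x = p.2.1) :
    ∀ p ∈ D, ∀ x : ℝ,
      (deriv (u p) x * deriv (fun y => deriv (fun E => u (p.1, E, p.2.2) y) p.2.1) x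
        - deriv (deriv (u p)) x * deriv (fun E => u (p.1, E, p.2.2) x) p.2.1 = 1) ∧
      (deriv (u p) x * deriv (fun y => deriv (fun a => u (a, p.2.1, p.2.2) y) p.1) x
        - deriv (deriv (u p)) x * deriv (fun a => u (a, p.2.1, p.2.2) x) p.1
          = u p x) ∧
      (deriv (u p) x * deriv (fun y => deriv (fun c => u (p.1, p.2.1, c) y) p.2.2) x
        - deriv (deriv (u p)) x * deriv (fun c => u (p.1, p.2.1, c) x) p.2.2
          = (u p x) ^ 2 / 2) := by
  intro p hp x
  refine ⟨?_, ?_, ?_⟩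
  · -- E direction
    obtain ⟨A, B, hA, hBx, hid⟩ := key2 f F hF D hD u hu2 huC1 huxC1 hODE hEn p hp
      ((0:ℝ), (1:ℝ), (0:ℝ)) x
    have hline : ∀ s : ℝ, p + s • ((0:ℝ), (1:ℝ), (0:ℝ)) = (p.1, p.2.1 + s, p.2.2) := by
      intro s; simp [Prod.ext_iff]
    simp only [hline] at hA hBx
    have h1 : deriv (fun E : ℝ => u (p.1, E, p.2.2) x) p.2.1 = A := by
      have h := deriv_comp_const_add (fun E : ℝ => u (p.1, E, p.2.2) x) p.2.1 0
      rw [add_zero] at h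
      rw [← h]; exact hA.deriv
    have hfun : (fun y : ℝ => deriv (fun E : ℝ => u (p.1, E, p.2.2) y) p.2.1)
        = fun y : ℝ => deriv (fun s : ℝ => u (p.1, p.2.1 + s, p.2.2) y) 0 := by
      funext y
      have h := deriv_comp_const_add (fun E : ℝ => u (p.1, E, p.2.2) y) p.2.1 0
      rw [add_zero] at h
      exact h.symm
    have h2 : deriv (fun y : ℝ => deriv (fun E : ℝ => u (p.1, E, p.2.2) y) p.2.1) x = B := by
      rw [hfun]; exact hBx.deriv
    rw [h1, h2]
    simpa using hid
  · -- a direction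
    obtain ⟨A, B, hA, hBx, hid⟩ := key2 f F hF D hD u hu2 huC1 huxC1 hODE hEn p hp
      ((1:ℝ), (0:ℝ), (0:ℝ)) x
    have hline : ∀ s : ℝ, p + s • ((1:ℝ), (0:ℝ), (0:ℝ)) = (p.1 + s, p.2.1, p.2.2) := by
      intro s; simp [Prod.ext_iff]
    simp only [hline] at hA hBx
    have h1 : deriv (fun a : ℝ => u (a, p.2.1, p.2.2) x) p.1 = A := by
      have h := deriv_comp_const_add (fun a : ℝ => u (a, p.2.1, p.2.2) x) p.1 0
      rw [add_zero] at h
      rw [← h]; exact hA.deriv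
    have hfun : (fun y : ℝ => deriv (fun a : ℝ => u (a, p.2.1, p.2.2) y) p.1)
        = fun y : ℝ => deriv (fun s : ℝ => u (p.1 + s, p.2.1, p.2.2) y) 0 := by
      funext y
      have h := deriv_comp_const_add (fun a : ℝ => u (a, p.2.1, p.2.2) y) p.1 0
      rw [add_zero] at h
      exact h.symm
    have h2 : deriv (fun y : ℝ => deriv (fun a : ℝ => u (a, p.2.1, p.2.2) y) p.1) x = B := by
      rw [hfun]; exact hBx.deriv
    rw [h1, h2]
    simpa using hid
  · -- c direction
    obtain ⟨A, B, hA, hBx, hid⟩ := key2 f F hF D hD u hu2 huC1 huxC1 hODE hEn p hp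
      ((0:ℝ), (0:ℝ), (1:ℝ)) x
    have hline : ∀ s : ℝ, p + s • ((0:ℝ), (0:ℝ), (1:ℝ)) = (p.1, p.2.1, p.2.2 + s) := by
      intro s; simp [Prod.ext_iff]
    simp only [hline] at hA hBx
    have h1 : deriv (fun c : ℝ => u (p.1, p.2.1, c) x) p.2.2 = A := by
      have h := deriv_comp_const_add (fun c : ℝ => u (p.1, p.2.1, c) x) p.2.2 0
      rw [add_zero] at h
      rw [← h]; exact hA.deriv
    have hfun : (fun y : ℝ => deriv (fun c : ℝ => u (p.1, p.2.1, c) y) p.2.2)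
        = fun y : ℝ => deriv (fun s : ℝ => u (p.1, p.2.1, p.2.2 + s) y) 0 := by
      funext y
      have h := deriv_comp_const_add (fun c : ℝ => u (p.1, p.2.1, c) y) p.2.2 0
      rw [add_zero] at h
      exact h.symm
    have h2 : deriv (fun y : ℝ => deriv (fun c : ℝ => u (p.1, p.2.1, c) y) p.2.2) x = B := by
      rw [hfun]; exact hBx.deriv
    rw [h1, h2]
    have := hid
    simp only at this
    linarith [this]
end

section
/- Let D ⊆ ℝ³ be open with parameters p = (a,E,c), let T, M : D → ℝ be C¹, let u : ℝ × D → ℝ be C¹ with u(x + T(p); p) = u(x; p) for all x, p, and define φ₂(x) as the determinant of the 3×3 matrix with rows (∂_au(x;p), ∂_aT(p), ∂_aM(p)), (∂_Eu(x;p), ∂_ET(p), ∂_EM(p)), (∂_cu(x;p), ∂_cT(p), ∂_cM(p)). Then φ₂ is periodic in x with period T(p). If moreover f : ℝ → ℝ is C², each u(·;p) is C³ in x and satisfies u″ + f(u) − c·u = a, and the x-derivatives of u up to third order are C¹ in the parameters, then φ₂ satisfies the Jordan-chain relation ∂ₓ( −φ₂″ − f′(u)·φ₂ + c·φ₂ )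 = −( ∂_aT·∂_EM − ∂_ET·∂_aM )·∂ₓu. -/
open Set intervalIntegral MeasureTheory Filter Topology

/-- partial derivative in the first coordinate, as HasDerivAt, value = fderiv applied. -/
lemma pfst {F : ℝ × ℝ → ℝ} {so : Set (ℝ × ℝ)} (hso : IsOpen so)
    (hF : ContDiffOn ℝ 1 F so) {q : ℝ × ℝ} (hq : q ∈ so) :
    HasDerivAt (fun a' => F (a', q.2)) (fderiv ℝ F q (1, 0)) q.1 := by
  have hd : DifferentiableAt ℝ F q :=
    (hF.differentiableOn one_ne_zero q hq).differentiableAt (hso.mem_nhds hq)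
  have hcurve : HasDerivAt (fun a' : ℝ => ((a', q.2) : ℝ × ℝ)) (1, 0) q.1 :=
    (hasDerivAt_id q.1).prodMk (hasDerivAt_const q.1 q.2)
  exact (hd.hasFDerivAt.comp_hasDerivAt q.1 hcurve)

lemma psnd {F : ℝ × ℝ → ℝ} {so : Set (ℝ × ℝ)} (hso : IsOpen so)
    (hF : ContDiffOn ℝ 1 F so) {q : ℝ × ℝ} (hq : q ∈ so) :
    HasDerivAt (fun y => F (q.1, y)) (fderiv ℝ F q (0, 1)) q.2 := by
  have hd : DifferentiableAt ℝ F q :=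
    (hF.differentiableOn one_ne_zero q hq).differentiableAt (hso.mem_nhds hq)
  have hcurve : HasDerivAt (fun y : ℝ => ((q.1, y) : ℝ × ℝ)) (0, 1) q.2 :=
    (hasDerivAt_const q.2 q.1).prodMk (hasDerivAt_id q.2)
  exact (hd.hasFDerivAt.comp_hasDerivAt q.2 hcurve)

lemma contPfst {F : ℝ × ℝ → ℝ} {so : Set (ℝ × ℝ)} (hso : IsOpen so)
    (hF : ContDiffOn ℝ 1 F so) :
    ContinuousOn (fun q : ℝ × ℝ => fderiv ℝ F q (1, 0)) so :=
  (hF.continuousOn_fderiv_of_isOpen hso le_rfl).clm_apply continuousOn_const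

/-- Clairaut-type lemma: the parameter-derivative of `g` is differentiable in `x`
with derivative the parameter-derivative of `∂ₓ g`. -/
lemma clairaut {s : Set ℝ} (hs : IsOpen s) {g : ℝ → ℝ → ℝ}
    (hg : ContDiffOn ℝ 1 (fun q : ℝ × ℝ => g q.1 q.2) (s ×ˢ (univ : Set ℝ)))
    (hgx : ContDiffOn ℝ 1 (fun q : ℝ × ℝ => deriv (g q.1) q.2) (s ×ˢ (univ : Set ℝ)))
    {a : ℝ} (ha : a ∈ s) (x : ℝ) :
    HasDerivAt (fun y => deriv (fun a' => g a' y) a)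
      (deriv (fun a' => deriv (g a') x) a) x := by
  set G : ℝ × ℝ → ℝ := fun q => g q.1 q.2 with hG
  set H : ℝ × ℝ → ℝ := fun q => deriv (g q.1) q.2 with hH
  have hso : IsOpen (s ×ˢ (univ : Set ℝ)) := hs.prod isOpen_univ
  set P : ℝ × ℝ → ℝ := fun q => fderiv ℝ G q (1, 0) with hP
  set Q : ℝ × ℝ → ℝ := fun q => fderiv ℝ H q (1, 0) with hQ
  -- continuity of sections of H and Q
  have hHcont : ∀ a' ∈ s, Continuous (fun t => H (a', t)) := by
    intro a' ha'
    refine continuous_iff_continuousAt.2 fun t => ?_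
    exact (hgx.continuousOn.continuousAt (hso.mem_nhds ⟨ha', trivial⟩)).comp
      ((continuous_const.prodMk continuous_id).continuousAt)
  have hQcontOn : ContinuousOn Q (s ×ˢ (univ : Set ℝ)) := contPfst hso hgx
  have hQcont : Continuous (fun t => Q (a, t)) := by
    refine continuous_iff_continuousAt.2 fun t => ?_
    exact (hQcontOn.continuousAt (hso.mem_nhds ⟨ha, trivial⟩)).comp
      ((continuous_const.prodMk continuous_id).continuousAt)
  -- x-derivative of g
  have h2 : ∀ a' ∈ s, ∀ t : ℝ, HasDerivAt (g a') (H (a', t)) t := by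
    intro a' ha' t
    have := psnd hso hg (q := (a', t)) ⟨ha', trivial⟩
    exact this.differentiableAt.hasDerivAt
  -- integral representation of g
  have hrep : ∀ a' ∈ s, ∀ x' : ℝ, g a' x' = g a' 0 + ∫ t in (0:ℝ)..x', H (a', t) := by
    intro a' ha' x'
    have hint : IntervalIntegrable (fun t => H (a', t)) volume 0 x' :=
      (hHcont a' ha').intervalIntegrable 0 x'
    have := intervalIntegral.integral_eq_sub_of_hasDerivAt
      (f := g a') (f' := fun t => H (a', t)) (fun t _ => h2 a' ha' t) hint
    linarith
  -- differentiation under the integral sign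
  have key : ∀ x' : ℝ, HasDerivAt (fun a' => ∫ t in (0:ℝ)..x', H (a', t))
      (∫ t in (0:ℝ)..x', Q (a, t)) a := by
    intro x'
    obtain ⟨ε, εpos, hball⟩ := Metric.isOpen_iff.1 hs a ha
    have hcb : Metric.closedBall a (ε / 2) ⊆ s := by
      intro y hy
      exact hball (Metric.mem_ball.2 (lt_of_le_of_lt (Metric.mem_closedBall.1 hy) (by linarith)))
    have hK : IsCompact (Metric.closedBall a (ε / 2) ×ˢ uIcc (0:ℝ) x') :=
      (isCompact_closedBall _ _).prod isCompact_uIcc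
    have hQK : ContinuousOn Q (Metric.closedBall a (ε / 2) ×ˢ uIcc (0:ℝ) x') :=
      hQcontOn.mono (prod_mono hcb (subset_univ _))
    obtain ⟨C, hC⟩ := hK.exists_bound_of_continuousOn hQK
    refine (intervalIntegral.hasDerivAt_integral_of_dominated_loc_of_deriv_le
      (F := fun a' t => H (a', t)) (F' := fun a' t => Q (a', t)) (bound := fun _ => C)
      (Metric.ball_mem_nhds a (by positivity : (0:ℝ) < ε / 2)) ?_ ?_ ?_ ?_ ?_ ?_).2
    · filter_upwards [hs.mem_nhds ha] with a' ha'
      exact ((hHcont a' ha').aestronglyMeasurable)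
    · exact (hHcont a ha).intervalIntegrable 0 x'
    · exact hQcont.aestronglyMeasurable
    · refine Filter.Eventually.of_forall fun t ht a' ha' => ?_
      exact hC (a', t) ⟨Metric.ball_subset_closedBall ha', uIoc_subset_uIcc ht⟩
    · exact intervalIntegrable_const
    · refine Filter.Eventually.of_forall fun t ht a' ha' => ?_
      exact pfst hso hgx (q := (a', t)) ⟨hcb (Metric.ball_subset_closedBall ha'), trivial⟩
  -- representation of the parameter derivative
  have hPa0 : HasDerivAt (fun a' => g a' 0) (P (a, 0)) a :=
    pfst hso hg (q := (a, 0)) ⟨ha, trivial⟩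
  have hrep' : ∀ x' : ℝ, deriv (fun a' => g a' x') a
      = P (a, 0) + ∫ t in (0:ℝ)..x', Q (a, t) := by
    intro x'
    have heq : (fun a' => g a' x') =ᶠ[𝓝 a]
        fun a' => g a' 0 + ∫ t in (0:ℝ)..x', H (a', t) :=
      Filter.eventuallyEq_of_mem (hs.mem_nhds ha) fun a' ha' => hrep a' ha' x'
    exact ((hPa0.add (key x')).congr_of_eventuallyEq heq).deriv
  -- FTC
  have hFTC : HasDerivAt (fun x' => ∫ t in (0:ℝ)..x', Q (a, t)) (Q (a, x)) x :=
    intervalIntegral.integral_hasDerivAt_right (hQcont.intervalIntegrable 0 x)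
      hQcont.aestronglyMeasurable.stronglyMeasurableAtFilter hQcont.continuousAt
  have hfun : (fun y => deriv (fun a' => g a' y) a)
      = fun y => P (a, 0) + ∫ t in (0:ℝ)..y, Q (a, t) := funext hrep'
  have hval : deriv (fun a' => deriv (g a') x) a = Q (a, x) :=
    (pfst hso hgx (q := (a, x)) ⟨ha, trivial⟩).deriv
  rw [hfun, hval]
  exact hFTC.const_add (P (a, 0))

/-- For an affine direction `ι` in parameter space, the parameter derivative
`u_d(y) = ∂_d u(y)` is twice differentiable in `y` and satisfies the linearized ODE. -/
lemma direction {D : Set (ℝ × ℝ × ℝ)} (hD : IsOpen D)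
    {u : ℝ → ℝ × ℝ × ℝ → ℝ}
    (hu : ContDiffOn ℝ 1 (fun q : ℝ × (ℝ × ℝ × ℝ) => u q.1 q.2) ((univ : Set ℝ) ×ˢ D))
    {p : ℝ × ℝ × ℝ} (hp : p ∈ D)
    {f : ℝ → ℝ} (hf : ContDiff ℝ 2 f)
    (hODE : ∀ p' ∈ D, ∀ x : ℝ,
      deriv (deriv (fun y => u y p')) x + f (u x p') - p'.2.2 * u x p' = p'.1)
    (hk : ∀ k : ℕ, k ≤ 3 →
      ContDiffOn ℝ 1
        (fun q : (ℝ × ℝ × ℝ) × ℝ => iteratedDeriv k (fun y => u y q.1) q.2)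
        (D ×ˢ (univ : Set ℝ)))
    (ι : ℝ → ℝ × ℝ × ℝ) (a₀ : ℝ) (hι : ContDiff ℝ 1 ι) (hιa : ι a₀ = p)
    (r₁ r₃ : ℝ)
    (hι1 : HasDerivAt (fun a' => (ι a').1) r₁ a₀)
    (hι3 : HasDerivAt (fun a' => (ι a').2.2) r₃ a₀) :
    (∀ y : ℝ, HasDerivAt (fun y' => deriv (fun a' => u y' (ι a')) a₀)
        (deriv (fun a' => deriv (fun t => u t (ι a')) y) a₀) y) ∧
    (∀ y : ℝ, HasDerivAt (fun y' => deriv (fun a' => deriv (fun t => u t (ι a')) y') a₀)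
        (r₁ + r₃ * u y p - deriv f (u y p) * deriv (fun a' => u y (ι a')) a₀
          + p.2.2 * deriv (fun a' => u y (ι a')) a₀) y) := by
  set s : Set ℝ := ι ⁻¹' D with hsdef
  have hs : IsOpen s := hD.preimage hι.continuous
  have ha₀ : a₀ ∈ s := by simp only [hsdef, mem_preimage, hιa]; exact hp
  have hso : IsOpen (s ×ˢ (univ : Set ℝ)) := hs.prod isOpen_univ
  have hgJ : ContDiffOn ℝ 1 (fun q : ℝ × ℝ => u q.2 (ι q.1)) (s ×ˢ (univ : Set ℝ)) :=
    hu.comp ((contDiff_snd.prodMk (hι.comp contDiff_fst)).contDiffOn)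
      (fun q hq => ⟨trivial, hq.1⟩)
  have hkJ : ∀ k : ℕ, k ≤ 3 → ContDiffOn ℝ 1
      (fun q : ℝ × ℝ => iteratedDeriv k (fun y => u y (ι q.1)) q.2)
      (s ×ˢ (univ : Set ℝ)) := fun k hk3 =>
    (hk k hk3).comp (((hι.comp contDiff_fst).prodMk contDiff_snd).contDiffOn)
      (fun q hq => ⟨hq.1, trivial⟩)
  have h1J : ContDiffOn ℝ 1 (fun q : ℝ × ℝ => deriv (fun y => u y (ι q.1)) q.2)
      (s ×ˢ (univ : Set ℝ)) :=
    (hkJ 1 (by norm_num)).congr (fun q hq => by rw [iteratedDeriv_one])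
  have h2J : ContDiffOn ℝ 1 (fun q : ℝ × ℝ => deriv (deriv (fun y => u y (ι q.1))) q.2)
      (s ×ˢ (univ : Set ℝ)) :=
    (hkJ 2 (by norm_num)).congr (fun q hq => by rw [iteratedDeriv_succ, iteratedDeriv_one])
  have c0 : ∀ y : ℝ, HasDerivAt (fun y' => deriv (fun a' => u y' (ι a')) a₀)
      (deriv (fun a' => deriv (fun t => u t (ι a')) y) a₀) y :=
    fun y => clairaut hs (g := fun a y => u y (ι a)) hgJ h1J ha₀ y
  have c1 : ∀ y : ℝ, HasDerivAt (fun y' => deriv (fun a' => deriv (fun t => u t (ι a')) y') a₀)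
      (deriv (fun a' => deriv (deriv (fun t => u t (ι a'))) y) a₀) y :=
    fun y => clairaut hs (g := fun a => deriv (fun t => u t (ι a))) h1J h2J ha₀ y
  refine ⟨c0, fun y => ?_⟩
  have HODE : deriv (fun a' => deriv (deriv (fun t => u t (ι a'))) y) a₀
      = r₁ + r₃ * u y p - deriv f (u y p) * deriv (fun a' => u y (ι a')) a₀
        + p.2.2 * deriv (fun a' => u y (ι a')) a₀ := by
    have Hu : HasDerivAt (fun a' => u y (ι a')) (deriv (fun a' => u y (ι a')) a₀) a₀ :=
      (pfst hso hgJ (q := (a₀, y)) ⟨ha₀, trivial⟩).differentiableAt.hasDerivAt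
    have H2 : HasDerivAt (fun a' => deriv (deriv (fun t => u t (ι a'))) y)
        (deriv (fun a' => deriv (deriv (fun t => u t (ι a'))) y) a₀) a₀ :=
      (pfst hso h2J (q := (a₀, y)) ⟨ha₀, trivial⟩).differentiableAt.hasDerivAt
    have hfd : HasDerivAt f (deriv f (u y p)) (u y p) :=
      ((hf.differentiable (by norm_num)) (u y p)).hasDerivAt
    rw [← hιa] at hfd
    have Hf : HasDerivAt (fun a' => f (u y (ι a')))
        (deriv f (u y (ι a₀)) * deriv (fun a' => u y (ι a')) a₀) a₀ := hfd.comp a₀ Hu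
    have Hc : HasDerivAt (fun a' => (ι a').2.2 * u y (ι a'))
        (r₃ * u y (ι a₀) + (ι a₀).2.2 * deriv (fun a' => u y (ι a')) a₀) a₀ := hι3.mul Hu
    have Hsum := (H2.add Hf).sub Hc
    have heq : (fun a' => deriv (deriv (fun t => u t (ι a'))) y + f (u y (ι a'))
          - (ι a').2.2 * u y (ι a')) =ᶠ[𝓝 a₀] fun a' => (ι a').1 :=
      eventuallyEq_of_mem (hs.mem_nhds ha₀) (fun a' ha' => hODE (ι a') ha' y)
    have huniq := (Hsum.congr_of_eventuallyEq heq.symm).unique hι1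
    rw [hιa] at huniq
    linarith
  rw [← HODE]
  exact c1 y

/-- Derivative in a parameter direction of `u` at a shifted point `x + T p`. -/
lemma shiftD {D : Set (ℝ × ℝ × ℝ)} (hD : IsOpen D)
    {T : ℝ × ℝ × ℝ → ℝ} (hT : ContDiffOn ℝ 1 T D)
    {u : ℝ → ℝ × ℝ × ℝ → ℝ}
    (hu : ContDiffOn ℝ 1 (fun q : ℝ × (ℝ × ℝ × ℝ) => u q.1 q.2) ((univ : Set ℝ) ×ˢ D))
    (hper : ∀ x : ℝ, ∀ p ∈ D, u (x + T p) p = u x p)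
    {p : ℝ × ℝ × ℝ} (hp : p ∈ D)
    (ι : ℝ → ℝ × ℝ × ℝ) {a₀ : ℝ} (hι : ContDiff ℝ 1 ι) (hιa : ι a₀ = p) (x : ℝ) :
    deriv (fun a' => u (x + T p) (ι a')) a₀
      = deriv (fun a' => u x (ι a')) a₀
        - deriv (fun y => u y p) x * deriv (fun a' => T (ι a')) a₀ := by
  set s : Set ℝ := ι ⁻¹' D with hsdef
  have hs : IsOpen s := hD.preimage hι.continuous
  have ha₀ : a₀ ∈ s := by simp only [hsdef, mem_preimage, hιa]; exact hp
  have hιd : DifferentiableAt ℝ ι a₀ := (hι.differentiable one_ne_zero).differentiableAt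
  have hιv : HasDerivAt ι (deriv ι a₀) a₀ := hιd.hasDerivAt
  set v : ℝ × ℝ × ℝ := deriv ι a₀ with hv
  have hTd : DifferentiableAt ℝ T p :=
    (hT.differentiableOn one_ne_zero p hp).differentiableAt (hD.mem_nhds hp)
  have hTι : HasDerivAt (fun a' => T (ι a')) (deriv (fun a' => T (ι a')) a₀) a₀ := by
    have : DifferentiableAt ℝ (fun a' => T (ι a')) a₀ := by
      rw [← hιa] at hTd
      exact hTd.comp a₀ hιd
    exact this.hasDerivAt
  set τ : ℝ := deriv (fun a' => T (ι a')) a₀ with hτ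
  have huJ : DifferentiableAt ℝ (fun q : ℝ × (ℝ × ℝ × ℝ) => u q.1 q.2) (x, p) :=
    (hu.differentiableOn one_ne_zero (x, p) ⟨trivial, hp⟩).differentiableAt
      ((isOpen_univ.prod hD).mem_nhds ⟨trivial, hp⟩)
  set L := fderiv ℝ (fun q : ℝ × (ℝ × ℝ × ℝ) => u q.1 q.2) (x, p) with hL
  have hux : HasDerivAt (fun y => u y p) (L (1, 0)) x :=
    HasFDerivAt.comp_hasDerivAt (f := fun y : ℝ => ((y, p) : ℝ × (ℝ × ℝ × ℝ))) x huJ.hasFDerivAt ((hasDerivAt_id' x).prodMk (hasDerivAt_const x p))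
  have hud : HasDerivAt (fun a' => u x (ι a')) (L (0, v)) a₀ := by
    have hcurve : HasDerivAt (fun a' => ((x, ι a') : ℝ × (ℝ × ℝ × ℝ))) (0, v) a₀ :=
      (hasDerivAt_const a₀ x).prodMk hιv
    have hf0 := huJ.hasFDerivAt
    rw [← hιa] at hf0
    have h2 := hf0.comp_hasDerivAt a₀ hcurve
    rw [hιa] at h2
    exact h2
  -- the shifted function
  have hγ : HasDerivAt (fun a' => ((x + T p - T (ι a'), ι a') : ℝ × (ℝ × ℝ × ℝ)))
      (-τ, v) a₀ := by
    have h1 : HasDerivAt (fun a' => x + T p - T (ι a')) (-τ) a₀ := by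
      simpa using (hasDerivAt_const a₀ (x + T p)).fun_sub hTι
    exact h1.prodMk hιv
  have hshift : HasDerivAt (fun a' => u (x + T p - T (ι a')) (ι a')) (L (-τ, v)) a₀ := by
    have hf := huJ.hasFDerivAt
    have hpt : ((x + T p - T (ι a₀), ι a₀) : ℝ × (ℝ × ℝ × ℝ)) = (x, p) := by
      rw [hιa]; norm_num
    rw [← hpt] at hf
    have h2 := hf.comp_hasDerivAt a₀ hγ
    rw [hpt] at h2
    exact h2
  have heq : (fun a' => u (x + T p) (ι a')) =ᶠ[𝓝 a₀]
      fun a' => u (x + T p - T (ι a')) (ι a') := by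
    refine eventuallyEq_of_mem (hs.mem_nhds ha₀) fun a' ha' => ?_
    have := hper (x + T p - T (ι a')) (ι a') ha'
    rw [show x + T p - T (ι a') + T (ι a') = x + T p by ring] at this
    exact this
  have hL' : L (-τ, v) = L (0, v) - τ * L (1, 0) := by
    have : ((-τ, v) : ℝ × (ℝ × ℝ × ℝ)) = ((0 : ℝ), v) + (-τ) • ((1 : ℝ), (0 : ℝ × ℝ × ℝ)) := by
      simp [Prod.ext_iff]
    rw [this, map_add, ContinuousLinearMap.map_smul, smul_eq_mul]
    ring
  have := (hshift.congr_of_eventuallyEq heq).deriv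
  rw [this, hL', hud.deriv, hux.deriv]
  ring

lemma det3_s15 (a b c d e f g h i : ℝ) :
    Matrix.det !![a, b, c; d, e, f; g, h, i]
      = a * e * i - a * f * h - b * d * i + b * f * g + c * d * h - c * e * g := by
  simp [Matrix.det_fin_three]

/-- For a `C¹` family `u(x; p)` of functions periodic in `x` with period `T(p)`,
`p = (a, E, c)`, and `M(p)` a `C¹` function (the mass), the determinant
`φ₂(x) = det [[u_a, T_a, M_a], [u_E, T_E, M_E], [u_c, T_c, M_c]]` is periodic in `x`
with period `T(p)`.  If moreover `u(·;p)` is `C³` in `x` and solves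
`u″ + f(u) - cu = a` with `f` of class `C²`, and the `x`-derivatives of `u` up to third
order are `C¹` in the parameters, then
`∂ₓ( -φ₂″ - f′(u) φ₂ + c φ₂ ) = -(T_a M_E - T_E M_a) ∂ₓu`. -/
theorem stmt_15 (D : Set (ℝ × ℝ × ℝ)) (hD : IsOpen D)
    (T M : ℝ × ℝ × ℝ → ℝ) (hT : ContDiffOn ℝ 1 T D) (hM : ContDiffOn ℝ 1 M D)
    (u : ℝ → ℝ × ℝ × ℝ → ℝ)
    (hu : ContDiffOn ℝ 1 (fun q : ℝ × (ℝ × ℝ × ℝ) => u q.1 q.2)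
      ((univ : Set ℝ) ×ˢ D))
    (hper : ∀ x : ℝ, ∀ p ∈ D, u (x + T p) p = u x p) :
    ∀ p ∈ D, ∀ φ₂ : ℝ → ℝ,
      (∀ x : ℝ, φ₂ x = Matrix.det
        !![deriv (fun a => u x (a, p.2.1, p.2.2)) p.1,
             deriv (fun a => T (a, p.2.1, p.2.2)) p.1,
             deriv (fun a => M (a, p.2.1, p.2.2)) p.1;
           deriv (fun E => u x (p.1, E, p.2.2)) p.2.1,
             deriv (fun E => T (p.1, E, p.2.2)) p.2.1,
             deriv (fun E => M (p.1, E, p.2.2)) p.2.1;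
           deriv (fun c => u x (p.1, p.2.1, c)) p.2.2,
             deriv (fun c => T (p.1, p.2.1, c)) p.2.2,
             deriv (fun c => M (p.1, p.2.1, c)) p.2.2]) →
      Function.Periodic φ₂ (T p) ∧
      (∀ f : ℝ → ℝ, ContDiff ℝ 2 f →
        (∀ p' ∈ D, ContDiff ℝ 3 (fun x => u x p')) →
        (∀ p' ∈ D, ∀ x : ℝ,
          deriv (deriv (fun y => u y p')) x + f (u x p') - p'.2.2 * u x p' = p'.1) →
        (∀ k : ℕ, k ≤ 3 →
          ContDiffOn ℝ 1
            (fun q : (ℝ × ℝ × ℝ) × ℝ => iteratedDeriv k (fun y => u y q.1) q.2)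
            (D ×ˢ (univ : Set ℝ))) →
        ∀ x : ℝ,
          deriv (fun y =>
            -(deriv (deriv φ₂) y) - deriv f (u y p) * φ₂ y + p.2.2 * φ₂ y) x =
          -(deriv (fun a => T (a, p.2.1, p.2.2)) p.1
                * deriv (fun E => M (p.1, E, p.2.2)) p.2.1
              - deriv (fun E => T (p.1, E, p.2.2)) p.2.1
                * deriv (fun a => M (a, p.2.1, p.2.2)) p.1)
            * deriv (fun y => u y p) x) := by
  rintro ⟨a₀, E₀, c₀⟩ hp φ₂ hφ
  dsimp only at hφ ⊢
  have hca : ContDiff ℝ 1 (fun t : ℝ => ((t, E₀, c₀) : ℝ × ℝ × ℝ)) :=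
    contDiff_id.prodMk contDiff_const
  have hcE : ContDiff ℝ 1 (fun t : ℝ => ((a₀, t, c₀) : ℝ × ℝ × ℝ)) :=
    contDiff_const.prodMk (contDiff_id.prodMk contDiff_const)
  have hcc : ContDiff ℝ 1 (fun t : ℝ => ((a₀, E₀, t) : ℝ × ℝ × ℝ)) :=
    contDiff_const.prodMk (contDiff_const.prodMk contDiff_id)
  constructor
  · -- periodicity
    intro x
    have sha : deriv (fun a => u (x + T (a₀, E₀, c₀)) (a, E₀, c₀)) a₀
        = deriv (fun a => u x (a, E₀, c₀)) a₀ - deriv (fun y => u y (a₀, E₀, c₀)) x * deriv (fun a => T (a, E₀, c₀)) a₀ :=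
      shiftD hD hT hu hper hp (fun t => (t, E₀, c₀)) hca rfl x
    have shE : deriv (fun E => u (x + T (a₀, E₀, c₀)) (a₀, E, c₀)) E₀
        = deriv (fun E => u x (a₀, E, c₀)) E₀ - deriv (fun y => u y (a₀, E₀, c₀)) x * deriv (fun E => T (a₀, E, c₀)) E₀ :=
      shiftD hD hT hu hper hp (fun t => (a₀, t, c₀)) hcE rfl x
    have shc : deriv (fun c => u (x + T (a₀, E₀, c₀)) (a₀, E₀, c)) c₀
        = deriv (fun c => u x (a₀, E₀, c)) c₀ - deriv (fun y => u y (a₀, E₀, c₀)) x * deriv (fun c => T (a₀, E₀, c)) c₀ :=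
      shiftD hD hT hu hper hp (fun t => (a₀, E₀, t)) hcc rfl x
    rw [hφ (x + T (a₀, E₀, c₀)), hφ x, det3_s15, det3_s15, sha, shE, shc]
    ring
  · -- the Jordan chain relation
    intro f hf hu3 hODE hk x
    obtain ⟨c0a, c1a⟩ := direction hD hu hp hf hODE hk (fun t => (t, E₀, c₀)) a₀ hca rfl
      1 0 (hasDerivAt_id a₀) (hasDerivAt_const a₀ c₀)
    obtain ⟨c0E, c1E⟩ := direction hD hu hp hf hODE hk (fun t => (a₀, t, c₀)) E₀ hcE rfl
      0 0 (hasDerivAt_const E₀ a₀) (hasDerivAt_const E₀ c₀)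
    obtain ⟨c0c, c1c⟩ := direction hD hu hp hf hODE hk (fun t => (a₀, E₀, t)) c₀ hcc rfl
      0 1 (hasDerivAt_const c₀ a₀) (hasDerivAt_id c₀)
    have C0a : ∀ y : ℝ, HasDerivAt (fun y' => deriv (fun a => u y' (a, E₀, c₀)) a₀) (deriv (fun a => deriv (fun t => u t (a, E₀, c₀)) y) a₀) y := c0a
    have C0E : ∀ y : ℝ, HasDerivAt (fun y' => deriv (fun E => u y' (a₀, E, c₀)) E₀) (deriv (fun E => deriv (fun t => u t (a₀, E, c₀)) y) E₀) y := c0E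
    have C0c : ∀ y : ℝ, HasDerivAt (fun y' => deriv (fun c => u y' (a₀, E₀, c)) c₀) (deriv (fun c => deriv (fun t => u t (a₀, E₀, c)) y) c₀) y := c0c
    have C1a : ∀ y : ℝ, HasDerivAt (fun y' => deriv (fun a => deriv (fun t => u t (a, E₀, c₀)) y') a₀) (1 + 0 * u y (a₀, E₀, c₀) - deriv f (u y (a₀, E₀, c₀)) * deriv (fun a => u y (a, E₀, c₀)) a₀ + c₀ * deriv (fun a => u y (a, E₀, c₀)) a₀) y := c1a
    have C1E : ∀ y : ℝ, HasDerivAt (fun y' => deriv (fun E => deriv (fun t => u t (a₀, E, c₀)) y') E₀) (0 + 0 * u y (a₀, E₀, c₀) - deriv f (u y (a₀, E₀, c₀)) * deriv (fun E => u y (a₀, E, c₀)) E₀ + c₀ * deriv (fun E => u y (a₀, E, c₀)) E₀) y := c1E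
    have C1c : ∀ y : ℝ, HasDerivAt (fun y' => deriv (fun c => deriv (fun t => u t (a₀, E₀, c)) y') c₀) (0 + 1 * u y (a₀, E₀, c₀) - deriv f (u y (a₀, E₀, c₀)) * deriv (fun c => u y (a₀, E₀, c)) c₀ + c₀ * deriv (fun c => u y (a₀, E₀, c)) c₀) y := c1c
    have hφ' : ∀ y : ℝ, φ₂ y
        = (deriv (fun E => T (a₀, E, c₀)) E₀ * deriv (fun c => M (a₀, E₀, c)) c₀ - deriv (fun E => M (a₀, E, c₀)) E₀ * deriv (fun c => T (a₀, E₀, c)) c₀) * deriv (fun a => u y (a, E₀, c₀)) a₀ - (deriv (fun a => T (a, E₀, c₀)) a₀ * deriv (fun c => M (a₀, E₀, c)) c₀ - deriv (fun a => M (a, E₀, c₀)) a₀ * deriv (fun c => T (a₀, E₀, c)) c₀) * deriv (fun E => u y (a₀, E, c₀)) E₀ + (deriv (fun a => T (a, E₀, c₀)) a₀ * deriv (fun E => M (a₀, E, c₀)) E₀ - deriv (fun a => M (a, E₀, c₀)) a₀ * deriv (fun E => T (a₀, E, c₀)) E₀) * deriv (fun c => u y (a₀, E₀, c)) c₀ :=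 by
      intro y
      rw [hφ y, det3_s15]
      ring
    have hφfun : φ₂ = fun y => (deriv (fun E => T (a₀, E, c₀)) E₀ * deriv (fun c => M (a₀, E₀, c)) c₀ - deriv (fun E => M (a₀, E, c₀)) E₀ * deriv (fun c => T (a₀, E₀, c)) c₀) * deriv (fun a => u y (a, E₀, c₀)) a₀ - (deriv (fun a => T (a, E₀, c₀)) a₀ * deriv (fun c => M (a₀, E₀, c)) c₀ - deriv (fun a => M (a, E₀, c₀)) a₀ * deriv (fun c => T (a₀, E₀, c)) c₀) * deriv (fun E => u y (a₀, E, c₀)) E₀ + (deriv (fun a => T (a, E₀, c₀)) a₀ * deriv (fun E => M (a₀, E, c₀)) E₀ - deriv (fun a => M (a, E₀, c₀)) a₀ * deriv (fun E => T (a₀, E, c₀)) E₀) * deriv (fun c => u y (a₀, E₀, c)) c₀ :=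
      funext hφ'
    have hD1 : ∀ y : ℝ, HasDerivAt φ₂
        ((deriv (fun E => T (a₀, E, c₀)) E₀ * deriv (fun c => M (a₀, E₀, c)) c₀ - deriv (fun E => M (a₀, E, c₀)) E₀ * deriv (fun c => T (a₀, E₀, c)) c₀) * deriv (fun a => deriv (fun t => u t (a, E₀, c₀)) y) a₀ - (deriv (fun a => T (a, E₀, c₀)) a₀ * deriv (fun c => M (a₀, E₀, c)) c₀ - deriv (fun a => M (a, E₀, c₀)) a₀ * deriv (fun c => T (a₀, E₀, c)) c₀) * deriv (fun E => deriv (fun t => u t (a₀, E, c₀)) y) E₀ + (deriv (fun a => T (a, E₀, c₀)) a₀ * deriv (fun E => M (a₀, E, c₀)) E₀ - deriv (fun a => M (a, E₀, c₀)) a₀ * deriv (fun E => T (a₀, E, c₀)) E₀) * deriv (fun c => deriv (fun t => u t (a₀, E₀, c)) y) c₀) y := by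
      intro y
      rw [hφfun]
      exact (((C0a y).const_mul _).sub ((C0E y).const_mul _)).add ((C0c y).const_mul _)
    have hd1 : deriv φ₂ = fun y => (deriv (fun E => T (a₀, E, c₀)) E₀ * deriv (fun c => M (a₀, E₀, c)) c₀ - deriv (fun E => M (a₀, E, c₀)) E₀ * deriv (fun c => T (a₀, E₀, c)) c₀) * deriv (fun a => deriv (fun t => u t (a, E₀, c₀)) y) a₀ - (deriv (fun a => T (a, E₀, c₀)) a₀ * deriv (fun c => M (a₀, E₀, c)) c₀ - deriv (fun a => M (a, E₀, c₀)) a₀ * deriv (fun c => T (a₀, E₀, c)) c₀) * deriv (fun E => deriv (fun t => u t (a₀, E, c₀)) y) E₀ + (deriv (fun a => T (a, E₀, c₀)) a₀ * deriv (fun E => M (a₀, E, c₀)) E₀ - deriv (fun a => M (a, E₀, c₀)) a₀ * deriv (fun E => T (a₀, E, c₀)) E₀) * deriv (fun c => deriv (fun t => u t (a₀, E₀, c)) y) c₀ :=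
      funext fun y => (hD1 y).deriv
    have hD2 : ∀ y : ℝ, HasDerivAt (deriv φ₂)
        ((deriv (fun E => T (a₀, E, c₀)) E₀ * deriv (fun c => M (a₀, E₀, c)) c₀ - deriv (fun E => M (a₀, E, c₀)) E₀ * deriv (fun c => T (a₀, E₀, c)) c₀) * (1 + 0 * u y (a₀, E₀, c₀) - deriv f (u y (a₀, E₀, c₀)) * deriv (fun a => u y (a, E₀, c₀)) a₀ + c₀ * deriv (fun a => u y (a, E₀, c₀)) a₀) - (deriv (fun a => T (a, E₀, c₀)) a₀ * deriv (fun c => M (a₀, E₀, c)) c₀ - deriv (fun a => M (a, E₀, c₀)) a₀ * deriv (fun c => T (a₀, E₀, c)) c₀) * (0 + 0 * u y (a₀, E₀, c₀) - deriv f (u y (a₀, E₀, c₀)) * deriv (fun E => u y (a₀, E, c₀)) E₀ + c₀ * deriv (fun E => u y (a₀, E, c₀)) E₀) + (deriv (fun a => T (a, E₀, c₀)) a₀ * deriv (fun E => M (a₀, E, c₀)) E₀ - deriv (fun a => M (a, E₀, c₀)) a₀ * deriv (fun E => T (a₀, E, c₀)) E₀) * (0 + 1 * u y (a₀, E₀,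 c₀) - deriv f (u y (a₀, E₀, c₀)) * deriv (fun c => u y (a₀, E₀, c)) c₀ + c₀ * deriv (fun c => u y (a₀, E₀, c)) c₀)) y := by
      intro y
      rw [hd1]
      exact (((C1a y).const_mul _).sub ((C1E y).const_mul _)).add ((C1c y).const_mul _)
    have hd2 : deriv (deriv φ₂)
        = fun y => (deriv (fun E => T (a₀, E, c₀)) E₀ * deriv (fun c => M (a₀, E₀, c)) c₀ - deriv (fun E => M (a₀, E, c₀)) E₀ * deriv (fun c => T (a₀, E₀, c)) c₀) * (1 + 0 * u y (a₀, E₀, c₀) - deriv f (u y (a₀, E₀, c₀)) * deriv (fun a => u y (a, E₀, c₀)) a₀ + c₀ * deriv (fun a => u y (a, E₀, c₀)) a₀) - (deriv (fun a => T (a, E₀, c₀)) a₀ * deriv (fun c => M (a₀, E₀, c)) c₀ - deriv (fun a => M (a, E₀, c₀)) a₀ * deriv (fun c => T (a₀, E₀, c)) c₀) * (0 + 0 * u y (a₀, E₀, c₀) - deriv f (u y (a₀, E₀, c₀)) * deriv (fun E => u y (a₀, E, c₀)) E₀ + c₀ * deriv (fun E => u y (a₀, E, c₀)) E₀) + (deriv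 (fun a => T (a, E₀, c₀)) a₀ * deriv (fun E => M (a₀, E, c₀)) E₀ - deriv (fun a => M (a, E₀, c₀)) a₀ * deriv (fun E => T (a₀, E, c₀)) E₀) * (0 + 1 * u y (a₀, E₀, c₀) - deriv f (u y (a₀, E₀, c₀)) * deriv (fun c => u y (a₀, E₀, c)) c₀ + c₀ * deriv (fun c => u y (a₀, E₀, c)) c₀) :=
      funext fun y => (hD2 y).deriv
    have hfinal : (fun y => -(deriv (deriv φ₂) y) - deriv f (u y (a₀, E₀, c₀)) * φ₂ y + c₀ * φ₂ y)
        = fun y => -(deriv (fun E => T (a₀, E, c₀)) E₀ * deriv (fun c => M (a₀, E₀, c)) c₀ - deriv (fun E => M (a₀, E, c₀)) E₀ * deriv (fun c => T (a₀, E₀, c)) c₀) - (deriv (fun a => T (a, E₀, c₀)) a₀ * deriv (fun E => M (a₀, E, c₀)) E₀ - deriv (fun a => M (a, E₀, c₀)) a₀ * deriv (fun E => T (a₀, E, c₀)) E₀) * u y (a₀, E₀, c₀) := by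
      funext y
      simp only [hd2]
      rw [hφ' y]
      ring
    rw [hfinal]
    have hux : HasDerivAt (fun y => u y (a₀, E₀, c₀)) (deriv (fun y => u y (a₀, E₀, c₀)) x) x :=
      (((hu3 (a₀, E₀, c₀) hp).differentiable (by norm_num)) x).hasDerivAt
    have hfin2 : HasDerivAt (fun y => -(deriv (fun E => T (a₀, E, c₀)) E₀ * deriv (fun c => M (a₀, E₀, c)) c₀ - deriv (fun E => M (a₀, E, c₀)) E₀ * deriv (fun c => T (a₀, E₀, c)) c₀) - (deriv (fun a => T (a, E₀, c₀)) a₀ * deriv (fun E => M (a₀, E, c₀)) E₀ - deriv (fun a => M (a, E₀, c₀)) a₀ * deriv (fun E => T (a₀, E, c₀)) E₀) * u y (a₀, E₀, c₀))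
        (-((deriv (fun a => T (a, E₀, c₀)) a₀ * deriv (fun E => M (a₀, E, c₀)) E₀ - deriv (fun a => M (a, E₀, c₀)) a₀ * deriv (fun E => T (a₀, E, c₀)) E₀) * deriv (fun y => u y (a₀, E₀, c₀)) x)) x :=
      HasDerivAt.const_sub _ (hux.const_mul _)
    rw [hfin2.deriv]
    ring
end

section
/- Let D ⊆ ℝ³ be open with parameters p = (a,E,c), T : D → ℝ and u : ℝ × D → ℝ be C¹ with u(x + T(p); p) = u(x; p) for all x, p, and define M(p) = ∫₀^{T(p)} u(x;p) dx and P(p) = ∫₀^{T(p)} u(x;p)² dx. Then for each parameter direction ξ ∈ {a,E,c}: ∫₀^{T(p)} ∂_ξu(x;p) dx = ∂_ξM(p) − u(0;p)·∂_ξT(p) and ∫₀^{T(p)} u(x;p)·∂_ξu(x;p) dx = (1/2)∂_ξP(p) − (1/2)u(0;p)²·∂_ξT(p). Consequently, for φ₀(x) = ∂_aT·∂_Eu(x) − ∂_ET·∂_au(x): ∫₀^{T(p)} φ₀(x) dx = ∂_aT·∂_EM − ∂_ET·∂_aM and ∫₀^{T(p)} u(x;p)·φ₀(x) dx = (1/2)(∂_aT·∂_EP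 − ∂_ET·∂_aP). -/
open Set MeasureTheory

open Metric Filter Topology intervalIntegral



lemma key_aux (v : ℝ → ℝ → ℝ) (S : ℝ → ℝ) (I : Set ℝ) (hI : IsOpen I)
    (hv : ContDiffOn ℝ 1 (fun q : ℝ × ℝ => v q.1 q.2) ((univ : Set ℝ) ×ˢ I))
    (hS : ContDiffOn ℝ 1 S I) (s₀ : ℝ) (hs₀ : s₀ ∈ I) :
    Continuous (fun x => deriv (fun t => v x t) s₀) ∧
    (∀ x : ℝ, DifferentiableAt ℝ (fun t => v x t) s₀) ∧
    HasDerivAt (fun s => ∫ x in (0:ℝ)..S s, v x s)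
      ((∫ x in (0:ℝ)..S s₀, deriv (fun t => v x t) s₀) + v (S s₀) s₀ * deriv S s₀) s₀ := by
  have hUI : IsOpen ((univ : Set ℝ) ×ˢ I) := isOpen_univ.prod hI
  set V : ℝ × ℝ → ℝ := fun q => v q.1 q.2 with hV
  set vs : ℝ → ℝ → ℝ := fun x s => fderiv ℝ V (x, s) (0, 1) with hvs
  have hderiv : ∀ x : ℝ, ∀ s ∈ I, HasDerivAt (fun t => v x t) (vs x s) s := by
    intro x s hs
    have hmem : ((x : ℝ), s) ∈ (univ : Set ℝ) ×ˢ I := ⟨mem_univ _, hs⟩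
    have hVd : DifferentiableAt ℝ V (x, s) :=
      (hv.contDiffAt (hUI.mem_nhds hmem)).differentiableAt one_ne_zero
    have hline : HasDerivAt (fun t : ℝ => ((x : ℝ), t)) (((0 : ℝ), (1 : ℝ))) s :=
      HasDerivAt.prodMk (hasDerivAt_const s x) (hasDerivAt_id s)
    exact hVd.hasFDerivAt.comp_hasDerivAt s hline
  have hderiv₀ : ∀ x, HasDerivAt (fun t => v x t) (vs x s₀) s₀ := fun x => hderiv x s₀ hs₀
  have hvs_eq : ∀ x, deriv (fun t => v x t) s₀ = vs x s₀ := fun x => (hderiv₀ x).deriv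
  have hvsc : ContinuousOn (fun q : ℝ × ℝ => vs q.1 q.2) ((univ : Set ℝ) ×ˢ I) := by
    have h1 : ContinuousOn (fun q : ℝ × ℝ => fderiv ℝ V q) ((univ : Set ℝ) ×ˢ I) :=
      hv.continuousOn_fderiv_of_isOpen hUI le_rfl
    exact h1.clm_apply continuousOn_const
  have hvsC : ∀ s ∈ I, Continuous fun x => vs x s := by
    intro s hs
    rw [continuous_iff_continuousAt]
    intro x
    exact (hvsc.continuousAt (hUI.mem_nhds ⟨mem_univ x, hs⟩)).comp
      ((continuous_id.prodMk continuous_const).continuousAt)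
  have hvC : ∀ s ∈ I, Continuous fun x => v x s := by
    intro s hs
    rw [continuous_iff_continuousAt]
    intro x
    exact ((hv.continuousOn.continuousAt (hUI.mem_nhds ⟨mem_univ x, hs⟩))).comp
      ((continuous_id.prodMk continuous_const).continuousAt)
  obtain ⟨ε, εpos, hεI⟩ := Metric.isOpen_iff.mp hI s₀ hs₀
  set δ := ε / 2 with hδ
  have δpos : 0 < δ := by positivity
  have hδI : closedBall s₀ δ ⊆ I := fun t ht => hεI (by
    rw [mem_ball]; rw [mem_closedBall] at ht; linarith)
  set b := S s₀ with hb
  set R := |b| + 1 with hR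
  have hRb : |b| ≤ R := by rw [hR]; linarith
  have hR0 : |(0:ℝ)| ≤ R := by rw [hR]; simp; positivity
  have habs : ∀ a' b' : ℝ, |a'| ≤ R → |b'| ≤ R → Set.uIoc a' b' ⊆ Icc (-R) R := by
    intro a' b' ha h2 x hx
    rw [Set.mem_uIoc] at hx
    rw [abs_le] at ha h2
    constructor <;> rcases hx with ⟨h3, h4⟩ | ⟨h3, h4⟩ <;> linarith
  have hK : IsCompact ((Icc (-R) R) ×ˢ closedBall s₀ δ) :=
    isCompact_Icc.prod (isCompact_closedBall _ _)
  obtain ⟨C, hC⟩ := hK.exists_bound_of_continuousOn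
    (hvsc.mono (fun q hq => ⟨mem_univ _, hδI hq.2⟩))
  set L := max C 0 with hL
  have hLnn : (0:ℝ) ≤ L := le_max_right _ _
  have hbound : ∀ x ∈ Icc (-R) R, ∀ s ∈ closedBall s₀ δ, |vs x s| ≤ L := by
    intro x hx s hs
    calc |vs x s| ≤ C := by simpa [Real.norm_eq_abs] using hC (x, s) ⟨hx, hs⟩
    _ ≤ L := le_max_left _ _
  have hlip : ∀ x ∈ Icc (-R) R, ∀ s ∈ closedBall s₀ δ, |v x s - v x s₀| ≤ L * |s - s₀| := by
    intro x hx s hs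
    have hconv : Convex ℝ (closedBall s₀ δ) := convex_closedBall _ _
    have := hconv.norm_image_sub_le_of_norm_hasDerivWithin_le
      (f := fun t => v x t) (f' := fun t => vs x t)
      (fun t ht => (hderiv x t (hδI ht)).hasDerivWithinAt)
      (fun t ht => by simpa [Real.norm_eq_abs] using hbound x hx t ht)
      (mem_closedBall_self δpos.le) hs
    simpa [Real.norm_eq_abs] using this
  -- Part A : differentiation under the integral sign, fixed endpoints
  have hsubI : Set.uIoc (0:ℝ) b ⊆ Icc (-R) R := habs 0 b hR0 hRb
  have hA := hasDerivAt_integral_of_dominated_loc_of_deriv_le (μ := volume)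
    (F := fun s x => v x s) (F' := fun s x => vs x s) (x₀ := s₀) (a := 0) (b := b)
    (bound := fun _ => L) (Metric.ball_mem_nhds s₀ δpos)
    (by filter_upwards [hI.mem_nhds hs₀] with s hs using (hvC s hs).aestronglyMeasurable)
    ((hvC s₀ hs₀).intervalIntegrable _ _)
    ((hvsC s₀ hs₀).aestronglyMeasurable)
    (Eventually.of_forall fun x hx s hs => by
      simpa [Real.norm_eq_abs] using hbound x (hsubI hx) s (ball_subset_closedBall hs))
    intervalIntegrable_const
    (Eventually.of_forall fun x hx s hs => hderiv x s (hδI (ball_subset_closedBall hs)))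
  -- Part C : moving endpoint at frozen parameter
  have hΦ : HasDerivAt (fun t => ∫ x in b..t, v x s₀) (v b s₀) b :=
    integral_hasDerivAt_right ((hvC s₀ hs₀).intervalIntegrable _ _)
      ((hvC s₀ hs₀).stronglyMeasurableAtFilter _ _) (hvC s₀ hs₀).continuousAt
  have hS' : HasDerivAt S (deriv S s₀) s₀ :=
    ((hS.contDiffAt (hI.mem_nhds hs₀)).differentiableAt one_ne_zero).hasDerivAt
  have hC2 : HasDerivAt (fun s => ∫ x in b..S s, v x s₀) (v b s₀ * deriv S s₀) s₀ :=
    hΦ.comp s₀ hS'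
  -- Part E : error term has derivative zero
  have hE : HasDerivAt (fun s => ∫ x in b..S s, (v x s - v x s₀)) 0 s₀ := by
    rw [hasDerivAt_iff_isLittleO]
    have h0 : (∫ x in b..S s₀, (v x s₀ - v x s₀)) = 0 := by simp
    rw [Asymptotics.isLittleO_iff]
    intro c hc
    have hc' : 0 < c / (L + 1) := by positivity
    have hball : Metric.ball b (min 1 (c / (L + 1))) ∈ 𝓝 b :=
      Metric.ball_mem_nhds _ (lt_min one_pos hc')
    have h1 : ∀ᶠ s in 𝓝 s₀, S s ∈ Metric.ball b (min 1 (c / (L + 1))) :=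
      hS'.continuousAt.eventually_mem hball
    have h2 : ∀ᶠ s in 𝓝 s₀, s ∈ closedBall s₀ δ := closedBall_mem_nhds s₀ δpos
    filter_upwards [h1, h2] with s hs1 hs2
    rw [Metric.mem_ball, Real.dist_eq, lt_min_iff] at hs1
    have hSR : |S s| ≤ R := by
      have := abs_sub_abs_le_abs_sub (S s) b
      rw [hR]; linarith [hs1.1]
    have hrange : Set.uIoc b (S s) ⊆ Icc (-R) R := habs b (S s) hRb hSR
    have hkey : ‖∫ x in b..S s, (v x s - v x s₀)‖ ≤ (L * |s - s₀|) * |S s - b| :=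
      intervalIntegral.norm_integral_le_of_norm_le_const fun x hx => by
        simpa [Real.norm_eq_abs] using hlip x (hrange hx) s hs2
    have ht0 : (0:ℝ) ≤ |s - s₀| := abs_nonneg _
    have hstep : (L * |s - s₀|) * |S s - b| ≤ (L * |s - s₀|) * (c / (L + 1)) :=
      mul_le_mul_of_nonneg_left (le_of_lt hs1.2) (by positivity)
    have hfin : (L * |s - s₀|) * (c / (L + 1)) ≤ c * |s - s₀| := by
      have heq : (L * |s - s₀|) * (c / (L + 1)) = (L / (L + 1)) * (c * |s - s₀|) := by ring
      have hle1 : L / (L + 1) ≤ 1 := by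
        rw [div_le_one (by linarith)]; linarith
      rw [heq]
      calc (L / (L + 1)) * (c * |s - s₀|) ≤ 1 * (c * |s - s₀|) :=
            mul_le_mul_of_nonneg_right hle1 (by positivity)
        _ = c * |s - s₀| := one_mul _
    simp only [h0, sub_zero, smul_zero]
    rw [Real.norm_eq_abs (s - s₀)]
    linarith
  -- decomposition
  have hdecomp : ∀ s ∈ I, (∫ x in (0:ℝ)..S s, v x s) =
      (∫ x in (0:ℝ)..b, v x s) +
        ((∫ x in b..S s, v x s₀) + (∫ x in b..S s, (v x s - v x s₀))) := by
    intro s hs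
    have h1 : (∫ x in (0:ℝ)..b, v x s) + (∫ x in b..S s, v x s)
        = ∫ x in (0:ℝ)..S s, v x s :=
      integral_add_adjacent_intervals ((hvC s hs).intervalIntegrable _ _)
        ((hvC s hs).intervalIntegrable _ _)
    have h2 : (∫ x in b..S s, v x s₀) + (∫ x in b..S s, (v x s - v x s₀))
        = ∫ x in b..S s, v x s := by
      rw [← intervalIntegral.integral_add ((hvC s₀ hs₀).intervalIntegrable _ _)
        (((hvC s hs).intervalIntegrable _ _).sub ((hvC s₀ hs₀).intervalIntegrable _ _))]
      exact intervalIntegral.integral_congr fun x _ => by ring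
    rw [h2, h1]
  have htotal : HasDerivAt (fun s => ∫ x in (0:ℝ)..S s, v x s)
      ((∫ x in (0:ℝ)..b, vs x s₀) + (v b s₀ * deriv S s₀ + 0)) s₀ := by
    refine HasDerivAt.congr_of_eventuallyEq (hA.2.add (hC2.add hE)) ?_
    filter_upwards [hI.mem_nhds hs₀] with s hs using hdecomp s hs
  refine ⟨(hvsC s₀ hs₀).congr fun x => (hvs_eq x).symm,
    fun x => (hderiv₀ x).differentiableAt, ?_⟩
  have hintc : (∫ x in (0:ℝ)..S s₀, deriv (fun t => v x t) s₀)
      = ∫ x in (0:ℝ)..b, vs x s₀ :=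
    intervalIntegral.integral_congr fun x _ => hvs_eq x
  rw [hintc]
  simpa using htotal



lemma main_aux (v : ℝ → ℝ → ℝ) (S m q : ℝ → ℝ) (I : Set ℝ) (hI : IsOpen I)
    (s₀ : ℝ) (hs₀ : s₀ ∈ I)
    (hv : ContDiffOn ℝ 1 (fun q : ℝ × ℝ => v q.1 q.2) ((univ : Set ℝ) ×ˢ I))
    (hS : ContDiffOn ℝ 1 S I)
    (hper : ∀ s ∈ I, v (S s) s = v 0 s)
    (hm : ∀ s ∈ I, m s = ∫ x in (0:ℝ)..S s, v x s)
    (hq : ∀ s ∈ I, q s = ∫ x in (0:ℝ)..S s, (v x s) ^ 2)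
    (w : ℝ → ℝ) (hw : ∀ x, w x = deriv (fun t => v x t) s₀) :
    Continuous w ∧
    ((∫ x in (0:ℝ)..S s₀, w x) = deriv m s₀ - v 0 s₀ * deriv S s₀) ∧
    ((∫ x in (0:ℝ)..S s₀, v x s₀ * w x)
      = 1 / 2 * deriv q s₀ - 1 / 2 * (v 0 s₀) ^ 2 * deriv S s₀) := by
  obtain ⟨hcont, hdiff, hder⟩ := key_aux v S I hI hv hS s₀ hs₀
  have hcw : Continuous w := hcont.congr fun x => (hw x).symm
  have hmd : deriv m s₀ = (∫ x in (0:ℝ)..S s₀, w x) + v 0 s₀ * deriv S s₀ := by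
    have he : m =ᶠ[𝓝 s₀] fun s => ∫ x in (0:ℝ)..S s, v x s := by
      filter_upwards [hI.mem_nhds hs₀] with s hs using hm s hs
    rw [he.deriv_eq, hder.deriv, hper s₀ hs₀]
    congr 1
    exact intervalIntegral.integral_congr fun x _ => (hw x).symm
  have hv2 : ContDiffOn ℝ 1 (fun q : ℝ × ℝ => (v q.1 q.2) ^ 2)
      ((univ : Set ℝ) ×ˢ I) := hv.pow 2
  obtain ⟨_, _, hder2⟩ := key_aux (fun x s => (v x s) ^ 2) S I hI hv2 hS s₀ hs₀
  have hsq : ∀ x : ℝ, deriv (fun t => (v x t) ^ 2) s₀ = 2 * (v x s₀ * w x) := by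
    intro x
    have h := (hdiff x).hasDerivAt.pow 2
    rw [(show HasDerivAt (fun t => v x t ^ 2) _ s₀ from h).deriv, ← hw x]
    push_cast
    ring
  have hqd : deriv q s₀ = 2 * (∫ x in (0:ℝ)..S s₀, v x s₀ * w x)
      + (v 0 s₀) ^ 2 * deriv S s₀ := by
    have he : q =ᶠ[𝓝 s₀] fun s => ∫ x in (0:ℝ)..S s, (v x s) ^ 2 := by
      filter_upwards [hI.mem_nhds hs₀] with s hs using hq s hs
    rw [he.deriv_eq, hder2.deriv, hper s₀ hs₀]
    congr 1
    rw [show (∫ x in (0:ℝ)..S s₀, deriv (fun t => (v x t) ^ 2) s₀)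
        = ∫ x in (0:ℝ)..S s₀, 2 * (v x s₀ * w x) from
      intervalIntegral.integral_congr fun x _ => hsq x]
    exact intervalIntegral.integral_const_mul 2 _
  exact ⟨hcw, by linarith, by linarith⟩

/-- For a `C¹` family `u(x; p)` periodic in `x` with `C¹` period `T(p)`,
`p = (a, E, c)`, with mass `M(p) = ∫₀^{T(p)} u` and momentum `P(p) = ∫₀^{T(p)} u²`:
for each parameter direction `ξ`, `∫₀^T ∂_ξ u = ∂_ξ M - u(0) ∂_ξ T` and
`∫₀^T u ∂_ξ u = (1/2) ∂_ξ P - (1/2) u(0)² ∂_ξ T`; consequently for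
`φ₀ = T_a ∂_E u - T_E ∂_a u` one has `∫₀^T φ₀ = T_a M_E - T_E M_a` and
`∫₀^T u φ₀ = (1/2)(T_a P_E - T_E P_a)`. -/
theorem stmt_16 (D : Set (ℝ × ℝ × ℝ)) (hD : IsOpen D)
    (T : ℝ × ℝ × ℝ → ℝ) (hT : ContDiffOn ℝ 1 T D)
    (u : ℝ → ℝ × ℝ × ℝ → ℝ)
    (hu : ContDiffOn ℝ 1 (fun q : ℝ × (ℝ × ℝ × ℝ) => u q.1 q.2)
      ((univ : Set ℝ) ×ˢ D))
    (hper : ∀ x : ℝ, ∀ p ∈ D, u (x + T p) p = u x p)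
    (M P : ℝ × ℝ × ℝ → ℝ)
    (hM : ∀ p ∈ D, M p = ∫ x in (0 : ℝ)..T p, u x p)
    (hP : ∀ p ∈ D, P p = ∫ x in (0 : ℝ)..T p, (u x p) ^ 2) :
    ∀ p ∈ D, ∀ ua uE uc : ℝ → ℝ, ∀ Ta TE Tc Ma ME Mc Pa PE Pc : ℝ,
      (∀ x : ℝ, ua x = deriv (fun a => u x (a, p.2.1, p.2.2)) p.1) →
      (∀ x : ℝ, uE x = deriv (fun E => u x (p.1, E, p.2.2)) p.2.1) →
      (∀ x : ℝ, uc x = deriv (fun c => u x (p.1, p.2.1, c)) p.2.2) →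
      Ta = deriv (fun a => T (a, p.2.1, p.2.2)) p.1 →
      TE = deriv (fun E => T (p.1, E, p.2.2)) p.2.1 →
      Tc = deriv (fun c => T (p.1, p.2.1, c)) p.2.2 →
      Ma = deriv (fun a => M (a, p.2.1, p.2.2)) p.1 →
      ME = deriv (fun E => M (p.1, E, p.2.2)) p.2.1 →
      Mc = deriv (fun c => M (p.1, p.2.1, c)) p.2.2 →
      Pa = deriv (fun a => P (a, p.2.1, p.2.2)) p.1 →
      PE = deriv (fun E => P (p.1, E, p.2.2)) p.2.1 →
      Pc = deriv (fun c => P (p.1, p.2.1, c)) p.2.2 →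
      ((∫ x in (0 : ℝ)..T p, ua x) = Ma - u 0 p * Ta) ∧
      ((∫ x in (0 : ℝ)..T p, uE x) = ME - u 0 p * TE) ∧
      ((∫ x in (0 : ℝ)..T p, uc x) = Mc - u 0 p * Tc) ∧
      ((∫ x in (0 : ℝ)..T p, u x p * ua x) = 1 / 2 * Pa - 1 / 2 * (u 0 p) ^ 2 * Ta) ∧
      ((∫ x in (0 : ℝ)..T p, u x p * uE x) = 1 / 2 * PE - 1 / 2 * (u 0 p) ^ 2 * TE) ∧
      ((∫ x in (0 : ℝ)..T p, u x p * uc x) = 1 / 2 * Pc - 1 / 2 * (u 0 p) ^ 2 * Tc) ∧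
      ((∫ x in (0 : ℝ)..T p, (Ta * uE x - TE * ua x)) = Ta * ME - TE * Ma) ∧
      ((∫ x in (0 : ℝ)..T p, u x p * (Ta * uE x - TE * ua x)) =
        1 / 2 * (Ta * PE - TE * Pa)) := by
  intro p hp ua uE uc Ta TE Tc Ma ME Mc Pa PE Pc hua huE huc hTa hTE hTc hMa hME hMc hPa hPE hPc
  obtain ⟨a₀, E₀, c₀⟩ := p
  -- direction a
  have hga : ContDiff ℝ 1 (fun q : ℝ × ℝ => (q.1, (q.2, E₀, c₀))) :=
    contDiff_fst.prodMk (contDiff_snd.prodMk contDiff_const)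
  have hla : ContDiff ℝ 1 (fun s : ℝ => ((s, E₀, c₀) : ℝ × ℝ × ℝ)) :=
    contDiff_id.prodMk contDiff_const
  have hIa : IsOpen ((fun s : ℝ => ((s, E₀, c₀) : ℝ × ℝ × ℝ)) ⁻¹' D) :=
    hD.preimage (continuous_id.prodMk continuous_const)
  have hva : ContDiffOn ℝ 1 (fun q : ℝ × ℝ => u q.1 (q.2, E₀, c₀))
      ((univ : Set ℝ) ×ˢ ((fun s : ℝ => ((s, E₀, c₀) : ℝ × ℝ × ℝ)) ⁻¹' D)) :=
    hu.comp hga.contDiffOn (fun q hq => ⟨mem_univ _, hq.2⟩)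
  have ha := main_aux (fun x s => u x (s, E₀, c₀)) (fun s => T (s, E₀, c₀))
    (fun s => M (s, E₀, c₀)) (fun s => P (s, E₀, c₀)) _ hIa a₀ hp hva
    (hT.comp hla.contDiffOn (fun s hs => hs))
    (fun s hs => by simpa using hper 0 _ hs)
    (fun s hs => hM _ hs) (fun s hs => hP _ hs) ua hua
  -- direction E
  have hgE : ContDiff ℝ 1 (fun q : ℝ × ℝ => (q.1, (a₀, q.2, c₀))) :=
    contDiff_fst.prodMk (contDiff_const.prodMk (contDiff_snd.prodMk contDiff_const))
  have hlE : ContDiff ℝ 1 (fun s : ℝ => ((a₀, s, c₀) : ℝ × ℝ × ℝ)) :=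
    contDiff_const.prodMk (contDiff_id.prodMk contDiff_const)
  have hIE : IsOpen ((fun s : ℝ => ((a₀, s, c₀) : ℝ × ℝ × ℝ)) ⁻¹' D) :=
    hD.preimage (continuous_const.prodMk (continuous_id.prodMk continuous_const))
  have hvE : ContDiffOn ℝ 1 (fun q : ℝ × ℝ => u q.1 (a₀, q.2, c₀))
      ((univ : Set ℝ) ×ˢ ((fun s : ℝ => ((a₀, s, c₀) : ℝ × ℝ × ℝ)) ⁻¹' D)) :=
    hu.comp hgE.contDiffOn (fun q hq => ⟨mem_univ _, hq.2⟩)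
  have hE := main_aux (fun x s => u x (a₀, s, c₀)) (fun s => T (a₀, s, c₀))
    (fun s => M (a₀, s, c₀)) (fun s => P (a₀, s, c₀)) _ hIE E₀ hp hvE
    (hT.comp hlE.contDiffOn (fun s hs => hs))
    (fun s hs => by simpa using hper 0 _ hs)
    (fun s hs => hM _ hs) (fun s hs => hP _ hs) uE huE
  -- direction c
  have hgc : ContDiff ℝ 1 (fun q : ℝ × ℝ => (q.1, (a₀, E₀, q.2))) :=
    contDiff_fst.prodMk (contDiff_const.prodMk (contDiff_const.prodMk contDiff_snd))
  have hlc : ContDiff ℝ 1 (fun s : ℝ => ((a₀, E₀, s) : ℝ × ℝ × ℝ)) :=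
    contDiff_const.prodMk (contDiff_const.prodMk contDiff_id)
  have hIc : IsOpen ((fun s : ℝ => ((a₀, E₀, s) : ℝ × ℝ × ℝ)) ⁻¹' D) :=
    hD.preimage (continuous_const.prodMk (continuous_const.prodMk continuous_id))
  have hvc : ContDiffOn ℝ 1 (fun q : ℝ × ℝ => u q.1 (a₀, E₀, q.2))
      ((univ : Set ℝ) ×ˢ ((fun s : ℝ => ((a₀, E₀, s) : ℝ × ℝ × ℝ)) ⁻¹' D)) :=
    hu.comp hgc.contDiffOn (fun q hq => ⟨mem_univ _, hq.2⟩)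
  have hc := main_aux (fun x s => u x (a₀, E₀, s)) (fun s => T (a₀, E₀, s))
    (fun s => M (a₀, E₀, s)) (fun s => P (a₀, E₀, s)) _ hIc c₀ hp hvc
    (hT.comp hlc.contDiffOn (fun s hs => hs))
    (fun s hs => by simpa using hper 0 _ hs)
    (fun s hs => hM _ hs) (fun s hs => hP _ hs) uc huc
  obtain ⟨hcua, ha1, ha2⟩ := ha
  obtain ⟨hcuE, hE1, hE2⟩ := hE
  obtain ⟨hcuc, hc1, hc2⟩ := hc
  have g1 : (∫ x in (0 : ℝ)..T (a₀, E₀, c₀), ua x) = Ma - u 0 (a₀, E₀, c₀) * Ta := by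
    rw [hMa, hTa]; exact ha1
  have g2 : (∫ x in (0 : ℝ)..T (a₀, E₀, c₀), uE x) = ME - u 0 (a₀, E₀, c₀) * TE := by
    rw [hME, hTE]; exact hE1
  have g3 : (∫ x in (0 : ℝ)..T (a₀, E₀, c₀), uc x) = Mc - u 0 (a₀, E₀, c₀) * Tc := by
    rw [hMc, hTc]; exact hc1
  have g4 : (∫ x in (0 : ℝ)..T (a₀, E₀, c₀), u x (a₀, E₀, c₀) * ua x)
      = 1 / 2 * Pa - 1 / 2 * (u 0 (a₀, E₀, c₀)) ^ 2 * Ta := by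
    rw [hPa, hTa]; exact ha2
  have g5 : (∫ x in (0 : ℝ)..T (a₀, E₀, c₀), u x (a₀, E₀, c₀) * uE x)
      = 1 / 2 * PE - 1 / 2 * (u 0 (a₀, E₀, c₀)) ^ 2 * TE := by
    rw [hPE, hTE]; exact hE2
  have g6 : (∫ x in (0 : ℝ)..T (a₀, E₀, c₀), u x (a₀, E₀, c₀) * uc x)
      = 1 / 2 * Pc - 1 / 2 * (u 0 (a₀, E₀, c₀)) ^ 2 * Tc := by
    rw [hPc, hTc]; exact hc2
  -- continuity of x ↦ u x p
  have hcu : Continuous fun x => u x (a₀, E₀, c₀) := by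
    rw [continuous_iff_continuousAt]
    intro x
    exact (hu.continuousOn.continuousAt
      ((isOpen_univ.prod hD).mem_nhds ⟨mem_univ _, hp⟩)).comp
      ((continuous_id.prodMk continuous_const).continuousAt)
  have g7 : (∫ x in (0 : ℝ)..T (a₀, E₀, c₀), (Ta * uE x - TE * ua x))
      = Ta * ME - TE * Ma := by
    rw [intervalIntegral.integral_sub (f := fun x => Ta * uE x) (g := fun x => TE * ua x)
      ((continuous_const.mul hcuE).intervalIntegrable _ _)
      ((continuous_const.mul hcua).intervalIntegrable _ _),
      intervalIntegral.integral_const_mul, intervalIntegral.integral_const_mul, g2, g1]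
    ring
  have g8 : (∫ x in (0 : ℝ)..T (a₀, E₀, c₀), u x (a₀, E₀, c₀) * (Ta * uE x - TE * ua x))
      = 1 / 2 * (Ta * PE - TE * Pa) := by
    rw [show (∫ x in (0 : ℝ)..T (a₀, E₀, c₀), u x (a₀, E₀, c₀) * (Ta * uE x - TE * ua x))
        = ∫ x in (0 : ℝ)..T (a₀, E₀, c₀),
            (Ta * (u x (a₀, E₀, c₀) * uE x) - TE * (u x (a₀, E₀, c₀) * ua x)) from
      intervalIntegral.integral_congr fun x _ => by ring,
      intervalIntegral.integral_sub (f := fun x => Ta * (u x (a₀, E₀, c₀) * uE x))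
        (g := fun x => TE * (u x (a₀, E₀, c₀) * ua x))
        ((continuous_const.mul (hcu.mul hcuE)).intervalIntegrable _ _)
        ((continuous_const.mul (hcu.mul hcua)).intervalIntegrable _ _),
      intervalIntegral.integral_const_mul, intervalIntegral.integral_const_mul, g5, g4]
    ring
  exact ⟨g1, g2, g3, g4, g5, g6, g7, g8⟩
end
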